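/- arXiv:math/0602008 — 4 statements merged into one kernel-verified Lean document; each statement's English description precedes it below -/
import Mathlib

section
/- Let p > 1, α > 1 − 1/p, and let f be a continuous real-valued function on [0,2]. Then for all 0 ≤ s < t ≤ 2 with t − s ≤ 1, |f(t) − f(s)|^p ≤ 2^{p−1} c(α,p)^p Σ_{i=0}^∞ (i+1)^{αp} Σ_k |f((k+1) 2^{−(n(t−s)+i)}) − f(k 2^{−(n(t−s)+i)})|^p, where for each i the inner sum runs over all integers k with s ≤ k 2^{−(n(t−s)+i)} and (k+1) 2^{−(n(t−s)+i)} ≤ t. -/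
open MeasureTheory ProbabilityTheory Filter
open scoped ENNReal NNReal Topology

lemma my_ceil_two_mul (x : ℝ) : ⌈2*x⌉ = 2*⌈x⌉ ∨ ⌈2*x⌉ = 2*⌈x⌉ - 1 := by
  have h1 : ⌈2*x⌉ ≤ 2*⌈x⌉ := by
    apply Int.ceil_le.2
    push_cast
    linarith [Int.le_ceil x]
  have h2 : 2*⌈x⌉ - 2 < ⌈2*x⌉ := by
    apply Int.lt_ceil.2
    push_cast
    linarith [Int.ceil_lt_add_one x]
  omega

lemma my_floor_two_mul (x : ℝ) : ⌊2*x⌋ = 2*⌊x⌋ ∨ ⌊2*x⌋ = 2*⌊x⌋ + 1 := by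
  have h1 : 2*⌊x⌋ ≤ ⌊2*x⌋ := by
    apply Int.le_floor.2
    push_cast
    linarith [Int.floor_le x]
  have h2 : ⌊2*x⌋ < 2*⌊x⌋ + 2 := by
    apply Int.floor_lt.2
    push_cast
    linarith [Int.lt_floor_add_one x]
  omega

lemma my_holder_tsum {ι : Type*} (f g : ι → ℝ≥0∞) {p q : ℝ} (hpq : p.HolderConjugate q) :
    ∑' i, f i * g i ≤ (∑' i, f i ^ p) ^ (1/p) * (∑' i, g i ^ q) ^ (1/q) := by
  refine ENNReal.summable.tsum_le_of_sum_le fun s => ?_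
  refine (ENNReal.inner_le_Lp_mul_Lq s f g hpq).trans ?_
  exact mul_le_mul' (ENNReal.rpow_le_rpow (ENNReal.sum_le_tsum s) hpq.one_div_nonneg)
    (ENNReal.rpow_le_rpow (ENNReal.sum_le_tsum s) hpq.symm.one_div_nonneg)

lemma my_summable {r : ℝ} (hr : 1 < r) : Summable (fun n : ℕ => ((n:ℝ)+1) ^ (-r)) := by
  have : Summable (fun n : ℕ => ((n:ℝ)) ^ (-r)) := Real.summable_nat_rpow.2 (by linarith)
  have h := (summable_nat_add_iff 1).2 this
  simpa using h

/-- The constant `c(α,p) = (∑_{n=1}^∞ n^{-αp/(p-1)})^{(p-1)/p}`. -/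
noncomputable def cConst (α p : ℝ) : ℝ :=
  (∑' n : ℕ, ((n : ℝ) + 1) ^ (-(α * p / (p - 1)))) ^ ((p - 1) / p)

/-- Dyadic bound on increments: for `p > 1`, `α > 1 - 1/p`, `f` continuous on `[0,2]` and
`0 ≤ s < t ≤ 2` with `t - s ≤ 1`, letting `N = n(t-s)` be the unique integer with
`2^{-N} ≤ t - s < 2^{-N+1}`, one has
`|f(t) - f(s)|^p ≤ 2^{p-1} c(α,p)^p ∑_{i=0}^∞ (i+1)^{αp} ∑_k |f((k+1)2^{-(N+i)}) - f(k 2^{-(N+i)})|^p`,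
the inner sum running over all integers `k` with `s ≤ k 2^{-(N+i)}` and `(k+1) 2^{-(N+i)} ≤ t`. -/
theorem increment_dyadic_bound (p α : ℝ) (hp : 1 < p) (hα : 1 - 1/p < α)
    (f : ℝ → ℝ) (hf : ContinuousOn f (Set.Icc 0 2))
    (s t : ℝ) (hs : 0 ≤ s) (hst : s < t) (ht : t ≤ 2) (hlen : t - s ≤ 1)
    (N : ℕ) (hN1 : (2:ℝ) ^ (-(N:ℤ)) ≤ t - s) (hN2 : t - s < (2:ℝ) ^ (-(N:ℤ) + 1)) :
    ENNReal.ofReal (|f t - f s| ^ p) ≤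
      ENNReal.ofReal (2 ^ (p - 1) * cConst α p ^ p) *
        ∑' i : ℕ, ENNReal.ofReal (((i : ℝ) + 1) ^ (α * p)) *
          ∑' k : ℤ, (if s ≤ (k : ℝ) / 2 ^ (N + i) ∧ ((k : ℝ) + 1) / 2 ^ (N + i) ≤ t then
            ENNReal.ofReal (|f (((k : ℝ) + 1) / 2 ^ (N + i)) - f ((k : ℝ) / 2 ^ (N + i))| ^ p)
            else 0) := by
  have hp0 : (0:ℝ) < p := lt_trans one_pos hp
  have hpne : p ≠ 0 := ne_of_gt hp0
  have hp1 : (0:ℝ) < p - 1 := by linarith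
  set q : ℝ := p / (p - 1) with hqdef
  have hpq : p.HolderConjugate q := Real.HolderConjugate.conjExponent hp
  have hq0 : 0 < q := hpq.symm.pos
  have hαq : 1 < α * p / (p-1) := by
    rw [lt_div_iff₀ hp1]
    have h1 : (1 - 1/p) * p = p - 1 := by field_simp
    nlinarith [mul_lt_mul_of_pos_right hα hp0]
  have hpow : ∀ m : ℕ, (0:ℝ) < 2 ^ m := fun m => pow_pos two_pos m
  -- the dyadic approximations
  set sd : ℕ → ℝ := fun i => ((⌈s * 2^(N+i)⌉ : ℤ) : ℝ) / 2^(N+i) with hsd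
  set td : ℕ → ℝ := fun i => ((⌊t * 2^(N+i)⌋ : ℤ) : ℝ) / 2^(N+i) with htd
  have hdiv_mono : ∀ (k l : ℤ) (m:ℕ), k ≤ l → (k:ℝ)/2^m ≤ (l:ℝ)/2^m := by
    intro k l m h
    have : (k:ℝ) ≤ (l:ℝ) := by exact_mod_cast h
    gcongr
  have hhalf : ∀ (k : ℤ) (m : ℕ), ((2*k : ℤ):ℝ)/2^(m+1) = (k:ℝ)/2^m := by
    intro k m
    have h0 : ((2:ℝ))^m ≠ 0 := ne_of_gt (hpow m)
    push_cast
    rw [pow_succ]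
    field_simp
  have hs_le_sd : ∀ i, s ≤ sd i := by
    intro i
    rw [hsd, le_div_iff₀ (hpow _)]
    exact Int.le_ceil _
  have hsd_lt : ∀ i, sd i < s + (2^(N+i))⁻¹ := by
    intro i
    rw [hsd, div_lt_iff₀ (hpow _), add_mul, inv_mul_cancel₀ (ne_of_gt (hpow _))]
    exact Int.ceil_lt_add_one _
  have htd_le_t : ∀ i, td i ≤ t := by
    intro i
    rw [htd, div_le_iff₀ (hpow _)]
    exact Int.floor_le _
  have ht_lt_td : ∀ i, t - (2^(N+i))⁻¹ < td i := by
    intro i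
    rw [htd, lt_div_iff₀ (hpow _), sub_mul, inv_mul_cancel₀ (ne_of_gt (hpow _))]
    exact Int.sub_one_lt_floor _
  have hceil : ∀ i, ⌈s * 2^(N+(i+1))⌉ = 2*⌈s * 2^(N+i)⌉ ∨
      ⌈s * 2^(N+(i+1))⌉ = 2*⌈s * 2^(N+i)⌉ - 1 := by
    intro i
    have h : s * 2^(N+(i+1)) = 2 * (s * 2^(N+i)) := by ring
    rw [h]
    exact my_ceil_two_mul _
  have hfloor : ∀ i, ⌊t * 2^(N+(i+1))⌋ = 2*⌊t * 2^(N+i)⌋ ∨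
      ⌊t * 2^(N+(i+1))⌋ = 2*⌊t * 2^(N+i)⌋ + 1 := by
    intro i
    have h : t * 2^(N+(i+1)) = 2 * (t * 2^(N+i)) := by ring
    rw [h]
    exact my_floor_two_mul _
  have hN1' : ((2:ℝ)^N)⁻¹ ≤ t - s := by
    have h : (2:ℝ) ^ (-(N:ℤ)) = ((2:ℝ)^N)⁻¹ := by
      rw [zpow_neg, zpow_natCast]
    linarith [h ▸ hN1]
  have hN2' : t - s < 2 * ((2:ℝ)^N)⁻¹ := by
    have h : (2:ℝ) ^ (-(N:ℤ)+1) = 2 * ((2:ℝ)^N)⁻¹ := by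
      rw [zpow_add₀ (two_ne_zero : (2:ℝ) ≠ 0), zpow_neg, zpow_natCast, zpow_one]
      ring
    linarith [h ▸ hN2]
  have h00 : ⌈s*2^(N+0)⌉ ≤ ⌊t*2^(N+0)⌋ := by
    have h1 : s * 2^(N+0) + 1 ≤ t * 2^(N+0) := by
      have h2 := mul_le_mul_of_nonneg_right hN1' (le_of_lt (hpow N))
      rw [inv_mul_cancel₀ (ne_of_gt (hpow N))] at h2
      simp only [Nat.add_zero]
      nlinarith
    calc ⌈s*2^(N+0)⌉ ≤ ⌊s*2^(N+0)⌋ + 1 := Int.ceil_le_floor_add_one _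
      _ = ⌊s*2^(N+0) + 1⌋ := by rw [Int.floor_add_one]
      _ ≤ ⌊t*2^(N+0)⌋ := Int.floor_le_floor h1
  have h01 : ⌊t*2^(N+0)⌋ ≤ ⌈s*2^(N+0)⌉ + 1 := by
    have h1 : ((⌊t*2^(N+0)⌋:ℤ):ℝ) ≤ t * 2^(N+0) := Int.floor_le _
    have h2 : s * 2^(N+0) ≤ ((⌈s*2^(N+0)⌉:ℤ):ℝ) := Int.le_ceil _
    have h3 : (t - s) * 2^(N+0) < 2 := by
      have h4 := mul_lt_mul_of_pos_right hN2' (hpow N)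
      rw [mul_assoc, inv_mul_cancel₀ (ne_of_gt (hpow N)), mul_one] at h4
      simpa using h4
    have h5 : ((⌊t*2^(N+0)⌋:ℤ):ℝ) < ((⌈s*2^(N+0)⌉ + 2 : ℤ):ℝ) := by
      push_cast
      nlinarith
    have h6 : ⌊t*2^(N+0)⌋ < ⌈s*2^(N+0)⌉ + 2 := by exact_mod_cast h5
    omega
  have hfloor_ge : ∀ i, 2*⌊t*2^(N+i)⌋ ≤ ⌊t*2^(N+(i+1))⌋ := by
    intro i; rcases hfloor i with h|h <;> omega
  have hceil_le : ∀ i, ⌈s*2^(N+(i+1))⌉ ≤ 2*⌈s*2^(N+i)⌉ := by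
    intro i; rcases hceil i with h|h <;> omega
  have htd_mono : ∀ i, td i ≤ td (i+1) := by
    intro i
    rw [htd]
    simp only
    rw [show N + (i+1) = (N+i)+1 from rfl, ← hhalf (⌊t*2^(N+i)⌋) (N+i)]
    exact hdiv_mono _ _ _ (hfloor_ge i)
  have hsd_anti : ∀ i, sd (i+1) ≤ sd i := by
    intro i
    rw [hsd]
    simp only
    rw [show N + (i+1) = (N+i)+1 from rfl, ← hhalf (⌈s*2^(N+i)⌉) (N+i)]
    exact hdiv_mono _ _ _ (hceil_le i)
  have hsd_le_sd0 : ∀ i, sd i ≤ sd 0 := by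
    intro i
    induction i with
    | zero => exact le_refl _
    | succ j ih => exact (hsd_anti j).trans ih
  have htd0_le_td : ∀ i, td 0 ≤ td i := by
    intro i
    induction i with
    | zero => exact le_refl _
    | succ j ih => exact ih.trans (htd_mono j)
  have hsd0_le_td0 : sd 0 ≤ td 0 := hdiv_mono _ _ _ h00
  have hsd_le_t : ∀ i, sd i ≤ t := fun i =>
    ((hsd_le_sd0 i).trans hsd0_le_td0).trans (htd_le_t 0)
  have hs_le_td : ∀ i, s ≤ td i := fun i =>
    ((hs_le_sd 0).trans hsd0_le_td0).trans (htd0_le_td i)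
  have hmem_sd : ∀ i, sd i ∈ Set.Icc (0:ℝ) 2 := fun i =>
    ⟨hs.trans (hs_le_sd i), (hsd_le_t i).trans ht⟩
  have hmem_td : ∀ i, td i ∈ Set.Icc (0:ℝ) 2 := fun i =>
    ⟨hs.trans (hs_le_td i), (htd_le_t i).trans ht⟩
  -- increments and inner sums
  set B : ℕ → ℝ≥0∞ := fun i => Nat.casesOn i (ENNReal.ofReal |f (td 0) - f (sd 0)|)
    (fun j => ENNReal.ofReal |f (td (j+1)) - f (td j)| +
      ENNReal.ofReal |f (sd j) - f (sd (j+1))|) with hB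
  set S : ℕ → ℝ≥0∞ := fun i => ∑' k : ℤ,
    (if s ≤ (k : ℝ) / 2 ^ (N + i) ∧ ((k : ℝ) + 1) / 2 ^ (N + i) ≤ t then
      ENNReal.ofReal (|f (((k : ℝ) + 1) / 2 ^ (N + i)) - f ((k : ℝ) / 2 ^ (N + i))| ^ p)
      else 0) with hS
  -- Step 3 : |f t - f s| is bounded by the sum of the B i
  have hstep3 : ENNReal.ofReal |f t - f s| ≤ ∑' i, B i := by
    have hpartial : ∀ m, ENNReal.ofReal |f (td m) - f (sd m)| ≤ ∑ i ∈ Finset.range (m+1), B i := by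
      intro m
      induction m with
      | zero => simp [hB]
      | succ j ih =>
        rw [Finset.sum_range_succ]
        have tri : |f (td (j+1)) - f (sd (j+1))| ≤ |f (td j) - f (sd j)| +
            (|f (td (j+1)) - f (td j)| + |f (sd j) - f (sd (j+1))|) := by
          have t1 := abs_sub_le (f (td (j+1))) (f (td j)) (f (sd (j+1)))
          have t2 := abs_sub_le (f (td j)) (f (sd j)) (f (sd (j+1)))
          linarith
        calc ENNReal.ofReal |f (td (j+1)) - f (sd (j+1))|
            ≤ ENNReal.ofReal (|f (td j) - f (sd j)| +
              (|f (td (j+1)) - f (td j)| + |f (sd j) - f (sd (j+1))|)) :=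
              ENNReal.ofReal_le_ofReal tri
          _ = ENNReal.ofReal |f (td j) - f (sd j)| +
              (ENNReal.ofReal |f (td (j+1)) - f (td j)| +
               ENNReal.ofReal |f (sd j) - f (sd (j+1))|) := by
              rw [ENNReal.ofReal_add (abs_nonneg _) (by positivity),
                ENNReal.ofReal_add (abs_nonneg _) (abs_nonneg _)]
          _ ≤ (∑ i ∈ Finset.range (j+1), B i) + B (j+1) := add_le_add ih (le_refl _)
    have h2inv : Tendsto (fun i:ℕ => ((2:ℝ)^(N+i))⁻¹) atTop (𝓝 0) := by
      have heq : (fun i:ℕ => ((2:ℝ)^(N+i))⁻¹) = fun i:ℕ => ((2:ℝ)^N)⁻¹ * (2⁻¹:ℝ)^i := by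
        funext i
        rw [pow_add, mul_inv, inv_pow]
      rw [heq]
      have h0 := tendsto_pow_atTop_nhds_zero_of_lt_one
        (by norm_num : (0:ℝ) ≤ 2⁻¹) (by norm_num : (2⁻¹:ℝ) < 1)
      simpa using h0.const_mul (((2:ℝ)^N)⁻¹)
    have htd_tend : Tendsto td atTop (𝓝 t) := by
      have hup : Tendsto (fun i:ℕ => t - ((2:ℝ)^(N+i))⁻¹) atTop (𝓝 t) := by
        simpa using tendsto_const_nhds.sub h2inv
      exact tendsto_of_tendsto_of_tendsto_of_le_of_le hup tendsto_const_nhds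
        (fun i => (ht_lt_td i).le) htd_le_t
    have hsd_tend : Tendsto sd atTop (𝓝 s) := by
      have hup : Tendsto (fun i:ℕ => s + ((2:ℝ)^(N+i))⁻¹) atTop (𝓝 s) := by
        simpa using tendsto_const_nhds.add h2inv
      exact tendsto_of_tendsto_of_tendsto_of_le_of_le tendsto_const_nhds hup
        hs_le_sd (fun i => (hsd_lt i).le)
    have hft : Tendsto (fun m => f (td m)) atTop (𝓝 (f t)) := by
      have hct : ContinuousWithinAt f (Set.Icc 0 2) t := hf t ⟨hs.trans hst.le, ht⟩
      exact hct.tendsto.comp (tendsto_nhdsWithin_iff.mpr ⟨htd_tend, Eventually.of_forall hmem_td⟩)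
    have hfs : Tendsto (fun m => f (sd m)) atTop (𝓝 (f s)) := by
      have hcs : ContinuousWithinAt f (Set.Icc 0 2) s := hf s ⟨hs, hst.le.trans ht⟩
      exact hcs.tendsto.comp (tendsto_nhdsWithin_iff.mpr ⟨hsd_tend, Eventually.of_forall hmem_sd⟩)
    have habs : Tendsto (fun m => ENNReal.ofReal |f (td m) - f (sd m)|) atTop
        (𝓝 (ENNReal.ofReal |f t - f s|)) :=
      (ENNReal.continuous_ofReal.tendsto _).comp ((hft.sub hfs).abs)
    exact le_of_tendsto habs (Eventually.of_forall fun m =>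
      (hpartial m).trans (ENNReal.sum_le_tsum _))
  -- term bound
  have hterm : ∀ (i:ℕ) (k:ℤ), s ≤ (k:ℝ)/2^(N+i) → ((k:ℝ)+1)/2^(N+i) ≤ t →
      ENNReal.ofReal (|f (((k:ℝ)+1)/2^(N+i)) - f ((k:ℝ)/2^(N+i))| ^ p) ≤ S i := by
    intro i k h1 h2
    rw [hS]
    refine le_trans ?_ (ENNReal.le_tsum k)
    rw [if_pos ⟨h1, h2⟩]
  have h2p : (2:ℝ≥0∞) ^ (p-1) = ENNReal.ofReal (2 ^ (p-1)) := by
    rw [← ENNReal.ofReal_rpow_of_nonneg (by norm_num) (by linarith)]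
    norm_num
  have hone_le : (1:ℝ≥0∞) ≤ ENNReal.ofReal (2^(p-1)) := by
    rw [← h2p]
    calc (1:ℝ≥0∞) = 2 ^ (0:ℝ) := by rw [ENNReal.rpow_zero]
      _ ≤ 2 ^ (p-1) := ENNReal.rpow_le_rpow_of_exponent_le (by norm_num) (by linarith)
  -- Step 2 : each B i ^ p is controlled by the inner dyadic sum S i
  have hstep2 : ∀ i, B i ^ p ≤ ENNReal.ofReal (2^(p-1)) * S i := by
    intro i
    match i with
    | 0 =>
      have hB0 : B 0 = ENNReal.ofReal |f (td 0) - f (sd 0)| := rfl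
      have hcase : ⌊t*2^(N+0)⌋ = ⌈s*2^(N+0)⌉ ∨ ⌊t*2^(N+0)⌋ = ⌈s*2^(N+0)⌉+1 := by omega
      rcases hcase with h | h
      · have heq : td 0 = sd 0 := by
          rw [htd, hsd]
          simp only
          rw [h]
        rw [hB0, heq, sub_self, abs_zero, ENNReal.ofReal_zero,
          ENNReal.zero_rpow_of_pos hp0]
        exact zero_le
      · have e1 : ((⌈s*2^(N+0)⌉:ℤ):ℝ)/2^(N+0) = sd 0 := by rw [hsd]
        have e2 : (((⌈s*2^(N+0)⌉:ℤ):ℝ)+1)/2^(N+0) = td 0 := by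
          rw [htd]
          simp only
          rw [h]
          push_cast
          ring
        have hkey := hterm 0 (⌈s*2^(N+0)⌉) (by rw [e1]; exact hs_le_sd 0)
          (by rw [e2]; exact htd_le_t 0)
        rw [e1, e2] at hkey
        calc B 0 ^ p = ENNReal.ofReal (|f (td 0) - f (sd 0)| ^ p) := by
              rw [hB0, ENNReal.ofReal_rpow_of_nonneg (abs_nonneg _) hp0.le]
          _ ≤ S 0 := hkey
          _ ≤ ENNReal.ofReal (2^(p-1)) * S 0 := le_mul_of_one_le_left zero_le hone_le
    | (j+1) =>
      have hBj : B (j+1) = ENNReal.ofReal |f (td (j+1)) - f (td j)| +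
          ENNReal.ofReal |f (sd j) - f (sd (j+1))| := rfl
      set x := |f (td (j+1)) - f (td j)| with hx
      set y := |f (sd j) - f (sd (j+1))| with hy
      set g : ℤ → ℝ≥0∞ := fun k =>
        (if s ≤ (k : ℝ) / 2 ^ (N + (j+1)) ∧ ((k : ℝ) + 1) / 2 ^ (N + (j+1)) ≤ t then
          ENNReal.ofReal
            (|f (((k : ℝ) + 1) / 2 ^ (N + (j+1))) - f ((k : ℝ) / 2 ^ (N + (j+1)))| ^ p)
          else 0) with hg
      have hSg : S (j+1) = ∑' k : ℤ, g k := by rw [hS, hg]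
      have hxcase : ENNReal.ofReal (x^p) = 0 ∨
          ∃ k:ℤ, ENNReal.ofReal (x^p) = g k ∧ k % 2 = 0 := by
        rcases hfloor j with hb | hb
        · left
          have heq : td (j+1) = td j := by
            rw [htd]
            simp only
            rw [hb, show N + (j+1) = (N+j)+1 from rfl, hhalf]
          rw [hx, heq, sub_self, abs_zero, Real.zero_rpow hpne, ENNReal.ofReal_zero]
        · right
          refine ⟨2*⌊t*2^(N+j)⌋, ?_, by omega⟩
          have e1 : ((2*⌊t*2^(N+j)⌋:ℤ):ℝ)/2^(N+(j+1)) = td j := by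
            rw [show N + (j+1) = (N+j)+1 from rfl, hhalf, htd]
          have e2 : (((2*⌊t*2^(N+j)⌋:ℤ):ℝ)+1)/2^(N+(j+1)) = td (j+1) := by
            rw [htd]
            simp only
            rw [hb]
            push_cast
            ring
          rw [hg]
          simp only
          rw [if_pos ⟨e1 ▸ hs_le_td j, e2 ▸ htd_le_t (j+1)⟩, e1, e2, hx]
      have hycase : ENNReal.ofReal (y^p) = 0 ∨
          ∃ k:ℤ, ENNReal.ofReal (y^p) = g k ∧ k % 2 ≠ 0 := by
        rcases hceil j with ha | ha
        · left
          have heq : sd (j+1) = sd j := by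
            rw [hsd]
            simp only
            rw [ha, show N + (j+1) = (N+j)+1 from rfl, hhalf]
          rw [hy, heq, sub_self, abs_zero, Real.zero_rpow hpne, ENNReal.ofReal_zero]
        · right
          refine ⟨2*⌈s*2^(N+j)⌉-1, ?_, by omega⟩
          have e1 : ((2*⌈s*2^(N+j)⌉-1:ℤ):ℝ)/2^(N+(j+1)) = sd (j+1) := by
            rw [hsd]
            simp only
            rw [ha]
          have e2 : (((2*⌈s*2^(N+j)⌉-1:ℤ):ℝ)+1)/2^(N+(j+1)) = sd j := by
            rw [show ((2*⌈s*2^(N+j)⌉-1:ℤ):ℝ)+1 = ((2*⌈s*2^(N+j)⌉:ℤ):ℝ) by push_cast; ring,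
              show N + (j+1) = (N+j)+1 from rfl, hhalf, hsd]
          rw [hg]
          simp only
          rw [if_pos ⟨e1 ▸ hs_le_sd (j+1), e2 ▸ hsd_le_t j⟩, e1, e2, hy]
      have hmain : ENNReal.ofReal (x^p) + ENNReal.ofReal (y^p) ≤ S (j+1) := by
        rw [hSg]
        rcases hxcase with hx0 | ⟨kx, hkx, hkxpar⟩ <;>
          rcases hycase with hy0 | ⟨ky, hky, hkypar⟩
        · rw [hx0, hy0]; simp
        · rw [hx0, zero_add, hky]; exact ENNReal.le_tsum ky
        · rw [hy0, add_zero, hkx]; exact ENNReal.le_tsum kx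
        · have hne : kx ≠ ky := by omega
          rw [hkx, hky, ← Finset.sum_pair hne]
          exact ENNReal.sum_le_tsum _
      calc B (j+1) ^ p
          ≤ 2^(p-1) * ((ENNReal.ofReal x)^p + (ENNReal.ofReal y)^p) := by
            rw [hBj]
            exact ENNReal.rpow_add_le_mul_rpow_add_rpow _ _ hp.le
        _ = ENNReal.ofReal (2^(p-1)) * (ENNReal.ofReal (x^p) + ENNReal.ofReal (y^p)) := by
            rw [h2p, ENNReal.ofReal_rpow_of_nonneg (abs_nonneg _) hp0.le,
              ENNReal.ofReal_rpow_of_nonneg (abs_nonneg _) hp0.le]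
        _ ≤ _ := mul_le_mul_right hmain _
  -- Step 4 : Hoelder and assembly
  have hcsum_nonneg : (0:ℝ) ≤ ∑' n : ℕ, ((n : ℝ) + 1) ^ (-(α * p / (p - 1))) :=
    tsum_nonneg fun n => Real.rpow_nonneg (by positivity) _
  have hc_nonneg : 0 ≤ cConst α p := Real.rpow_nonneg hcsum_nonneg _
  have hni : ∀ i:ℕ, (0:ℝ) < (i:ℝ)+1 := fun i => by positivity
  set F : ℕ → ℝ≥0∞ := fun i => ENNReal.ofReal (((i:ℝ)+1)^(-α)) with hF
  set G : ℕ → ℝ≥0∞ := fun i => ENNReal.ofReal (((i:ℝ)+1)^α) * B i with hG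
  have hFG : ∀ i, B i = G i * F i := by
    intro i
    have h1 : ((i:ℝ)+1)^α * ((i:ℝ)+1)^(-α) = 1 := by
      rw [← Real.rpow_add (hni i)]
      simp
    rw [hG, hF]
    calc B i = ENNReal.ofReal (((i:ℝ)+1)^α * ((i:ℝ)+1)^(-α)) * B i := by rw [h1]; simp
      _ = ENNReal.ofReal (((i:ℝ)+1)^α) * B i * ENNReal.ofReal (((i:ℝ)+1)^(-α)) := by
          rw [ENNReal.ofReal_mul (Real.rpow_nonneg (hni i).le α)]
          ring
  have hGp : ∀ i : ℕ, G i ^ p = ENNReal.ofReal (((i:ℝ)+1)^(α*p)) * B i ^ p := by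
    intro i
    rw [hG]
    simp only
    rw [ENNReal.mul_rpow_of_nonneg _ _ hp0.le,
      ENNReal.ofReal_rpow_of_nonneg (Real.rpow_nonneg (hni i).le _) hp0.le,
      ← Real.rpow_mul (hni i).le]
  have hFq : (∑' i, F i ^ q) ^ (1/q) = ENNReal.ofReal (cConst α p) := by
    have h1 : ∀ i:ℕ, F i ^ q = ENNReal.ofReal (((i:ℝ)+1)^(-(α * p / (p - 1)))) := by
      intro i
      rw [hF]
      simp only
      rw [ENNReal.ofReal_rpow_of_nonneg (Real.rpow_nonneg (hni i).le _) hq0.le,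
        ← Real.rpow_mul (hni i).le]
      congr 1
      rw [hqdef]
      ring
    rw [tsum_congr h1, ← ENNReal.ofReal_tsum_of_nonneg
        (fun n => Real.rpow_nonneg (by positivity) _) (my_summable hαq),
      ENNReal.ofReal_rpow_of_nonneg hcsum_nonneg (by positivity : (0:ℝ) ≤ 1/q)]
    congr 1
    unfold cConst
    congr 1
    rw [hqdef, one_div, inv_div]
  have hholder : ∑' i, B i ≤
      (∑' i : ℕ, ENNReal.ofReal (((i:ℝ)+1)^(α*p)) * B i ^ p) ^ (1/p) * ENNReal.ofReal (cConst α p) := by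
    calc ∑' i, B i = ∑' i, G i * F i := tsum_congr hFG
      _ ≤ (∑' i, G i ^ p)^(1/p) * (∑' i, F i ^ q)^(1/q) := my_holder_tsum G F hpq
      _ = _ := by rw [hFq, tsum_congr hGp]
  have hT : ∀ i : ℕ, ENNReal.ofReal (((i:ℝ)+1)^(α*p)) * B i ^ p ≤
      ENNReal.ofReal (2^(p-1)) * (ENNReal.ofReal (((i:ℝ)+1)^(α*p)) * S i) := by
    intro i
    calc ENNReal.ofReal (((i:ℝ)+1)^(α*p)) * B i ^ p
        ≤ ENNReal.ofReal (((i:ℝ)+1)^(α*p)) * (ENNReal.ofReal (2^(p-1)) * S i) :=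
          mul_le_mul_right (hstep2 i) _
      _ = _ := by ring
  calc ENNReal.ofReal (|f t - f s| ^ p) = (ENNReal.ofReal |f t - f s|) ^ p := by
        rw [ENNReal.ofReal_rpow_of_nonneg (abs_nonneg _) hp0.le]
    _ ≤ (∑' i, B i) ^ p := ENNReal.rpow_le_rpow hstep3 hp0.le
    _ ≤ ((∑' i : ℕ, ENNReal.ofReal (((i:ℝ)+1)^(α*p)) * B i ^ p) ^ (1/p) *
          ENNReal.ofReal (cConst α p)) ^ p := ENNReal.rpow_le_rpow hholder hp0.le
    _ = (∑' i : ℕ, ENNReal.ofReal (((i:ℝ)+1)^(α*p)) * B i ^ p) *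
          ENNReal.ofReal (cConst α p) ^ p := by
        rw [ENNReal.mul_rpow_of_nonneg _ _ hp0.le, ← ENNReal.rpow_mul, one_div,
          inv_mul_cancel₀ hpne, ENNReal.rpow_one]
    _ ≤ (∑' i : ℕ, ENNReal.ofReal (2^(p-1)) * (ENNReal.ofReal (((i:ℝ)+1)^(α*p)) * S i)) *
          ENNReal.ofReal (cConst α p) ^ p :=
        mul_le_mul_left (ENNReal.tsum_le_tsum hT) _
    _ = ENNReal.ofReal (2 ^ (p - 1) * cConst α p ^ p) *
          ∑' i : ℕ, ENNReal.ofReal (((i:ℝ)+1)^(α*p)) * S i := by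
        rw [ENNReal.tsum_mul_left, ENNReal.ofReal_mul (by positivity : (0:ℝ) ≤ 2^(p-1)),
          ENNReal.ofReal_rpow_of_nonneg hc_nonneg hp0.le]
        ring
end

section
/- Let p > 1, α > 1 − 1/p, f ∈ C([−1,1],ℝ) and h ∈ (0,1]. Then sup_{u∈[0,1]} |T_h^f(u) − T_0^f(u)| ≤ 2^{(p−1)/p} c(α,p) · S_p(f,h,α)^{1/p} (as an inequality in [0,∞]). -/
open MeasureTheory ProbabilityTheory Filter
open scoped ENNReal NNReal

/-- The dyadic sum `S_p(f,h,α)` (with `nh = n(h)`), valued in `[0,∞]`: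
`∑_{n=0}^∞ (n+1)^{αp} ∑_{k=0}^{2^{n+n(h)+1}-1} |f((k+1)2^{-(n+n(h))} - 1) - f(k 2^{-(n+n(h))} - 1)|^p`. -/
noncomputable def Sp (f : ℝ → ℝ) (nh : ℕ) (α p : ℝ) : ℝ≥0∞ :=
  ∑' n : ℕ, ENNReal.ofReal (((n : ℝ) + 1) ^ (α * p)) *
    ∑ k ∈ Finset.range (2 ^ (n + nh + 1)),
      ENNReal.ofReal (|f (((k : ℝ) + 1) / 2 ^ (n + nh) - 1) - f ((k : ℝ) / 2 ^ (n + nh) - 1)| ^ p)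

namespace FrameSup

noncomputable def J (m : ℕ) (t : ℝ) : ℕ := (⌊(2:ℝ)^m * (t+1)⌋).toNat
noncomputable def D (m : ℕ) (t : ℝ) : ℝ := (J m t : ℝ) / 2^m - 1
noncomputable def Inc (f : ℝ → ℝ) (m k : ℕ) : ℝ :=
  |f (((k : ℝ) + 1) / 2 ^ m - 1) - f ((k : ℝ) / 2 ^ m - 1)|
noncomputable def aSeq (f : ℝ → ℝ) (nh : ℕ) (x y : ℝ) : ℕ → ℝ
  | 0 => |f (D nh y) - f (D nh x)|
  | (n+1) => |f (D (n+nh+1) x) - f (D (n+nh) x)| + |f (D (n+nh+1) y) - f (D (n+nh) y)|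

lemma aSeq_nonneg (f : ℝ → ℝ) (nh : ℕ) (x y : ℝ) (n : ℕ) : 0 ≤ aSeq f nh x y n := by
  cases n with
  | zero => exact abs_nonneg _
  | succ n => exact add_nonneg (abs_nonneg _) (abs_nonneg _)

variable {m : ℕ} {t x y : ℝ}

lemma J_le (ht : -1 ≤ t) : (J m t : ℝ) ≤ 2^m * (t+1) := by
  have h0 : (0:ℝ) ≤ 2^m * (t+1) := by
    apply mul_nonneg (by positivity); linarith
  have h1 : (0:ℤ) ≤ ⌊(2:ℝ)^m * (t+1)⌋ := Int.floor_nonneg.mpr h0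
  have h2 : ((J m t : ℕ) : ℝ) = ((⌊(2:ℝ)^m * (t+1)⌋ : ℤ) : ℝ) := by
    rw [J]; exact_mod_cast congrArg (fun z : ℤ => (z : ℝ)) (Int.toNat_of_nonneg h1)
  rw [h2]; exact Int.floor_le _

lemma lt_J_add_one (m : ℕ) (t : ℝ) : 2^m * (t+1) < J m t + 1 := by
  have h1 := Int.lt_floor_add_one ((2:ℝ)^m * (t+1))
  have h2 : ((⌊(2:ℝ)^m * (t+1)⌋ : ℤ) : ℝ) ≤ (J m t : ℝ) := by
    rw [J]; exact_mod_cast Int.self_le_toNat _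
  linarith

lemma neg_one_le_D : -1 ≤ D m t := by
  have : (0:ℝ) ≤ (J m t : ℝ) / 2^m := by positivity
  rw [D]; linarith

lemma D_le (ht : -1 ≤ t) : D m t ≤ t := by
  have h2m : (0:ℝ) < 2^m := by positivity
  rw [D, sub_le_iff_le_add, div_le_iff₀ h2m]
  nlinarith [J_le (m := m) ht]

lemma sub_D_lt (m : ℕ) (t : ℝ) : t - D m t < 1/2^m := by
  have h2m : (0:ℝ) < 2^m := by positivity
  have h := lt_J_add_one m t
  have e1 : (J m t : ℝ)/2^m * 2^m = (J m t : ℝ) := div_mul_cancel₀ _ (ne_of_gt h2m)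
  have e2 : (1:ℝ)/2^m * 2^m = 1 := div_mul_cancel₀ _ (ne_of_gt h2m)
  rw [D]
  nlinarith [h, e1, e2, h2m]

lemma J_step (ht : -1 ≤ t) : J (m+1) t = 2 * J m t ∨ J (m+1) t = 2 * J m t + 1 := by
  have a1 : (J (m+1) t : ℝ) ≤ 2^(m+1)*(t+1) := J_le ht
  have a2 : (2:ℝ)^(m+1)*(t+1) < J (m+1) t + 1 := lt_J_add_one _ _
  have b1 : (J m t : ℝ) ≤ 2^m*(t+1) := J_le ht
  have b2 : (2:ℝ)^m*(t+1) < J m t + 1 := lt_J_add_one _ _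
  have p2 : (2:ℝ)^(m+1) = 2*2^m := by ring
  have c1 : (J (m+1) t : ℝ) < 2*(J m t : ℝ) + 2 := by nlinarith
  have c2 : 2*(J m t : ℝ) < (J (m+1) t : ℝ) + 1 := by nlinarith
  have d1 : J (m+1) t < 2 * J m t + 2 := by exact_mod_cast c1
  have d2 : 2 * J m t < J (m+1) t + 1 := by exact_mod_cast c2
  omega

lemma J_sep (ht : -1 ≤ x) (hxy : 1 ≤ 2^m * (y - x)) : J m x < J m y := by
  have a1 : (J m x : ℝ) ≤ 2^m*(x+1) := J_le ht
  have a2 : (2:ℝ)^m*(y+1) < J m y + 1 := lt_J_add_one _ _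
  have : (J m x : ℝ) < (J m y : ℝ) := by nlinarith
  exact_mod_cast this

lemma J_close (hy : -1 ≤ y) (hclose : 2^m * (y - x) < 2) :
    J m y ≤ J m x + 2 := by
  have a1 : (J m y : ℝ) ≤ 2^m*(y+1) := J_le hy
  have a2 : (2:ℝ)^m*(x+1) < J m x + 1 := lt_J_add_one _ _
  have : (J m y : ℝ) < (J m x : ℝ) + 3 := by nlinarith
  have h' : J m y < J m x + 3 := by exact_mod_cast this
  omega

lemma J_upper (ht : -1 ≤ t) (ht1 : t ≤ 1) : J m t ≤ 2^(m+1) := by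
  have a1 : (J m t : ℝ) ≤ 2^m*(t+1) := J_le ht
  have h2m : (0:ℝ) < 2^m := by positivity
  have : (J m t : ℝ) ≤ ((2^(m+1) : ℕ) : ℝ) := by
    push_cast
    have : (2:ℝ)^(m+1) = 2^m * 2 := by ring
    nlinarith
  exact_mod_cast this

lemma tendsto_D (ht : -1 ≤ t) : Tendsto (fun m => D m t) atTop (nhds t) := by
  apply tendsto_of_tendsto_of_tendsto_of_le_of_le
    (g := fun m : ℕ => t - (1/2:ℝ)^m) (h := fun _ : ℕ => t)
  · have h0 : Tendsto (fun m : ℕ => ((1:ℝ)/2)^m) atTop (nhds 0) :=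
      tendsto_pow_atTop_nhds_zero_of_lt_one (by norm_num) (by norm_num)
    simpa using tendsto_const_nhds.sub h0
  · exact tendsto_const_nhds
  · intro m
    have := sub_D_lt m t
    have e : ((1:ℝ)/2)^m = 1/2^m := by rw [div_pow]; norm_num
    show t - (1/2:ℝ)^m ≤ D m t
    rw [e]; linarith
  · intro m; exact D_le ht

lemma pair_rpow_bound {p : ℝ} (hp : 1 ≤ p) {b c : ℝ} (hb : 0 ≤ b) (hc : 0 ≤ c) {B : ℝ≥0∞}
    (hB : ENNReal.ofReal (b^p) + ENNReal.ofReal (c^p) ≤ B) :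
    ENNReal.ofReal ((b+c)^p) ≤ ENNReal.ofReal (2^(p-1)) * B := by
  have hp0 : (0:ℝ) ≤ p := by linarith
  have h1 : ENNReal.ofReal ((b+c)^p) = (ENNReal.ofReal b + ENNReal.ofReal c)^p := by
    rw [← ENNReal.ofReal_add hb hc, ENNReal.ofReal_rpow_of_nonneg (by linarith) hp0]
  rw [h1]
  refine le_trans (ENNReal.rpow_add_le_mul_rpow_add_rpow _ _ hp) ?_
  have e2 : (2:ℝ≥0∞)^(p-1) = ENNReal.ofReal (2^(p-1)) := by
    have h2 : ENNReal.ofReal 2 = 2 := by norm_num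
    rw [← h2, ENNReal.ofReal_rpow_of_pos (by norm_num)]
  rw [e2, ENNReal.ofReal_rpow_of_nonneg hb hp0, ENNReal.ofReal_rpow_of_nonneg hc hp0]
  exact mul_le_mul_right hB _

lemma two_terms_le (g : ℕ → ℝ≥0∞) (M k1 k2 : ℕ) (h1 : k1 < M) (h2 : k2 < M) (hne : k1 ≠ k2) :
    g k1 + g k2 ≤ ∑ k ∈ Finset.range M, g k := by
  rw [← Finset.sum_pair hne]
  refine Finset.sum_le_sum_of_subset ?_
  intro i hi
  simp only [Finset.mem_insert, Finset.mem_singleton] at hi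
  rcases hi with rfl | rfl <;> simp [Finset.mem_range, h1, h2]

lemma key (p α : ℝ) (hp : 1 < p) (hα : 1 - 1/p < α)
    (f : ℝ → ℝ) (hf : ContinuousOn f (Set.Icc (-1) 1))
    (h : ℝ) (h0 : 0 < h)
    (nh : ℕ) (hn1 : (2:ℝ) ^ (-(nh:ℤ)) ≤ h) (hn2 : h < (2:ℝ) ^ (-(nh:ℤ) + 1))
    (x y : ℝ) (hx : -1 ≤ x) (hy1 : y ≤ 1) (hyx : y = x + h) :
    ENNReal.ofReal |f y - f x| ≤
      ENNReal.ofReal (2 ^ ((p - 1) / p) * cConst α p) * (Sp f nh α p) ^ (1/p) := by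
  have hp_pos : (0:ℝ) < p := by linarith
  have hp0 : (0:ℝ) ≤ p := le_of_lt hp_pos
  have hp1 : (1:ℝ) ≤ p := le_of_lt hp
  have hpne : p ≠ 0 := ne_of_gt hp_pos
  have hxy : x ≤ y := by rw [hyx]; linarith
  have hx1 : x ≤ 1 := le_trans hxy hy1
  have hy : -1 ≤ y := le_trans hx hxy
  have hxI : x ∈ Set.Icc (-1:ℝ) 1 := ⟨hx, hx1⟩
  have hyI : y ∈ Set.Icc (-1:ℝ) 1 := ⟨hy, hy1⟩
  have h2nh : (0:ℝ) < 2^nh := by positivity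
  have hyxh : y - x = h := by rw [hyx]; ring
  have hinv : ((2:ℝ)^nh)⁻¹ ≤ h := by
    have e : (2:ℝ)^(-(nh:ℤ)) = ((2:ℝ)^nh)⁻¹ := by
      rw [zpow_neg, zpow_natCast]
    rwa [e] at hn1
  have H1 : (1:ℝ) ≤ 2^nh * h := by
    nlinarith [mul_le_mul_of_nonneg_left hinv (le_of_lt h2nh),
      mul_inv_cancel₀ (ne_of_gt h2nh)]
  have H2 : (2:ℝ)^nh * h < 2 := by
    have e2 : (2:ℝ)^(-(nh:ℤ)+1) = 2 * ((2:ℝ)^nh)⁻¹ := by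
      rw [zpow_add₀ (two_ne_zero), zpow_neg, zpow_natCast, zpow_one]; ring
    rw [e2] at hn2
    nlinarith [mul_lt_mul_of_pos_left hn2 h2nh, mul_inv_cancel₀ (ne_of_gt h2nh)]
  have hsep : ∀ n : ℕ, J (n+nh) x < J (n+nh) y := by
    intro n
    apply J_sep hx
    rw [hyxh, pow_add]
    have h2n : (1:ℝ) ≤ 2^n := one_le_pow₀ (by norm_num)
    nlinarith
  have hclose : J nh y ≤ J nh x + 2 := J_close hy (by rw [hyxh]; exact H2)
  -- Step D: the per-level bound
  have stepD : ∀ n : ℕ, ENNReal.ofReal (aSeq f nh x y n ^ p) ≤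
      ENNReal.ofReal (2^(p-1)) *
        ∑ k ∈ Finset.range (2^(n+nh+1)), ENNReal.ofReal (Inc f (n+nh) k ^ p) := by
    intro n
    have one_le_c : (1:ℝ≥0∞) ≤ ENNReal.ofReal (2^(p-1)) := by
      rw [ENNReal.one_le_ofReal]
      calc (1:ℝ) = 2^(0:ℝ) := (Real.rpow_zero 2).symm
      _ ≤ 2^(p-1) := Real.rpow_le_rpow_of_exponent_le one_le_two (by linarith)
    cases n with
    | zero =>
      simp only [Nat.zero_add]
      have hsep0 : J nh x < J nh y := by simpa using hsep 0
      have hup : J nh y ≤ 2^(nh+1) := J_upper hy hy1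
      have hcases : J nh y = J nh x + 1 ∨ J nh y = J nh x + 2 := by omega
      rcases hcases with hc | hc
      · have hEq : aSeq f nh x y 0 = Inc f nh (J nh x) := by
          show |f (D nh y) - f (D nh x)| = _
          rw [Inc, D, D, hc]
          push_cast
          ring_nf
        rw [hEq]
        refine le_trans (Finset.single_le_sum
          (f := fun k => ENNReal.ofReal (Inc f nh k ^ p)) (fun i _ => zero_le)
          (Finset.mem_range.mpr (lt_of_lt_of_le hsep0 hup))) ?_
        exact le_mul_of_one_le_left (zero_le) one_le_c
      · have htri : aSeq f nh x y 0 ≤ Inc f nh (J nh x) + Inc f nh (J nh x + 1) := by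
          show |f (D nh y) - f (D nh x)| ≤ _
          have e1 : D nh y = (((J nh x : ℝ)+1)+1)/2^nh - 1 := by
            rw [D, hc]; push_cast; ring_nf
          have e2 : D nh x = (J nh x : ℝ)/2^nh - 1 := rfl
          have tri := abs_sub_le (f (D nh y)) (f (((J nh x : ℝ)+1)/2^nh - 1)) (f (D nh x))
          have i1 : Inc f nh (J nh x) = |f (((J nh x : ℝ)+1)/2^nh - 1) - f (D nh x)| := by
            rw [Inc, e2]
          have i2 : Inc f nh (J nh x + 1) = |f (D nh y) - f (((J nh x : ℝ)+1)/2^nh - 1)| := by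
            rw [Inc, e1]; push_cast; ring_nf
          rw [i1, i2]; linarith
        have hmono : ENNReal.ofReal (aSeq f nh x y 0 ^ p) ≤
            ENNReal.ofReal ((Inc f nh (J nh x) + Inc f nh (J nh x + 1)) ^ p) :=
          ENNReal.ofReal_le_ofReal
            (Real.rpow_le_rpow (aSeq_nonneg f nh x y 0) htri hp0)
        refine le_trans hmono (pair_rpow_bound hp1 (abs_nonneg _) (abs_nonneg _) ?_)
        have hb2 : J nh x + 2 ≤ 2^(nh+1) := hc ▸ hup
        exact two_terms_le _ _ _ _ (lt_of_lt_of_le (by omega) hb2)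
          (lt_of_lt_of_le (by omega) hb2) (by omega)
    | succ n =>
      have hidx : n + 1 + nh = n + nh + 1 := by omega
      rw [hidx]
      set m := n + nh with hm
      -- description of level increments
      have hstep : ∀ t : ℝ, -1 ≤ t → t ≤ 1 →
          |f (D (m+1) t) - f (D m t)| = 0 ∨
          (|f (D (m+1) t) - f (D m t)| = Inc f (m+1) (2 * J m t) ∧ 2 * J m t < 2^(m+1+1)) := by
        intro t ht ht1
        rcases J_step (m := m) ht with he | he
        · left
          have hD : D (m+1) t = D m t := by
            rw [D, D, he]
            push_cast
            rw [pow_succ]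
            field_simp
          rw [hD, sub_self, abs_zero]
        · right
          constructor
          · have e1 : D m t = ((2 * J m t : ℕ) : ℝ)/2^(m+1) - 1 := by
              rw [D]
              push_cast
              rw [pow_succ]
              field_simp
            have e2 : D (m+1) t = (((2 * J m t : ℕ) : ℝ)+1)/2^(m+1) - 1 := by
              rw [D, he]; push_cast; ring_nf
            rw [Inc, e1, e2]
          · have hu : J (m+1) t ≤ 2^(m+1+1) := J_upper ht ht1
            omega
      have hax := hstep x hx hx1
      have hay := hstep y hy hy1
      have hxyJ : 2 * J m x ≠ 2 * J m y := by
        have hs := hsep n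
        rw [← hm] at hs
        omega
      have ha : aSeq f nh x y (n+1) =
          |f (D (m+1) x) - f (D m x)| + |f (D (m+1) y) - f (D m y)| := by
        show |f (D (n+nh+1) x) - f (D (n+nh) x)| + |f (D (n+nh+1) y) - f (D (n+nh) y)| = _
        rw [hm]
      rw [ha]
      refine pair_rpow_bound hp1 (abs_nonneg _) (abs_nonneg _) ?_
      have hzero : ENNReal.ofReal ((0:ℝ)^p) = 0 := by
        rw [Real.zero_rpow hpne, ENNReal.ofReal_zero]
      rcases hax with hax | ⟨hax, hkx⟩ <;> rcases hay with hay | ⟨hay, hky⟩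
      · rw [hax, hay, hzero, add_zero]; exact zero_le
      · rw [hax, hay, hzero, zero_add]
        exact Finset.single_le_sum (f := fun k => ENNReal.ofReal (Inc f (m+1) k ^ p))
          (fun i _ => zero_le) (Finset.mem_range.mpr hky)
      · rw [hax, hay, hzero, add_zero]
        exact Finset.single_le_sum (f := fun k => ENNReal.ofReal (Inc f (m+1) k ^ p))
          (fun i _ => zero_le) (Finset.mem_range.mpr hkx)
      · rw [hax, hay]
        exact two_terms_le _ _ _ _ hkx hky hxyJ
  -- Step B: telescoping
  have htel : ∀ N : ℕ, |f (D (N+nh) y) - f (D (N+nh) x)| ≤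
      ∑ n ∈ Finset.range (N+1), aSeq f nh x y n := by
    intro N
    induction N with
    | zero =>
      simp only [Nat.zero_add, Finset.sum_range_one]
      exact le_of_eq rfl
    | succ N ih =>
      rw [Finset.sum_range_succ]
      have hidx : N + 1 + nh = N + nh + 1 := by omega
      rw [hidx]
      have e : f (D (N+nh+1) y) - f (D (N+nh+1) x) =
          (f (D (N+nh) y) - f (D (N+nh) x)) - (f (D (N+nh+1) x) - f (D (N+nh) x)) +
          (f (D (N+nh+1) y) - f (D (N+nh) y)) := by ring
      have habs1 : |f (D (N+nh+1) y) - f (D (N+nh+1) x)| ≤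
          |f (D (N+nh) y) - f (D (N+nh) x)| +
          (|f (D (N+nh+1) x) - f (D (N+nh) x)| + |f (D (N+nh+1) y) - f (D (N+nh) y)|) := by
        rw [e]
        have t1 := abs_add_le ((f (D (N+nh) y) - f (D (N+nh) x)) - (f (D (N+nh+1) x) - f (D (N+nh) x))) (f (D (N+nh+1) y) - f (D (N+nh) y))
        have t2 := abs_sub (f (D (N+nh) y) - f (D (N+nh) x)) (f (D (N+nh+1) x) - f (D (N+nh) x))
        linarith
      refine le_trans habs1 (add_le_add ih (le_of_eq ?_))
      show |f (D (N+nh+1) x) - f (D (N+nh) x)| + |f (D (N+nh+1) y) - f (D (N+nh) y)| =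
        aSeq f nh x y (N+1)
      rfl
  -- Step C: limit
  have hDxlim : Tendsto (fun N : ℕ => f (D (N+nh) x)) atTop (nhds (f x)) := by
    have hDx : Tendsto (fun N : ℕ => D (N+nh) x) atTop (nhds x) :=
      (tendsto_D hx).comp (tendsto_add_atTop_nat nh)
    have hmem : ∀ N : ℕ, D (N+nh) x ∈ Set.Icc (-1:ℝ) 1 :=
      fun N => ⟨neg_one_le_D, le_trans (D_le hx) hx1⟩
    exact ((hf x hxI).tendsto).comp
      (tendsto_nhdsWithin_of_tendsto_nhds_of_eventually_within _ hDx
        (Eventually.of_forall hmem))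
  have hDylim : Tendsto (fun N : ℕ => f (D (N+nh) y)) atTop (nhds (f y)) := by
    have hDy : Tendsto (fun N : ℕ => D (N+nh) y) atTop (nhds y) :=
      (tendsto_D hy).comp (tendsto_add_atTop_nat nh)
    have hmem : ∀ N : ℕ, D (N+nh) y ∈ Set.Icc (-1:ℝ) 1 :=
      fun N => ⟨neg_one_le_D, le_trans (D_le hy) hy1⟩
    exact ((hf y hyI).tendsto).comp
      (tendsto_nhdsWithin_of_tendsto_nhds_of_eventually_within _ hDy
        (Eventually.of_forall hmem))
  have habs : Tendsto (fun N : ℕ => |f (D (N+nh) y) - f (D (N+nh) x)|) atTop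
      (nhds |f y - f x|) := (hDylim.sub hDxlim).abs
  have hC : ENNReal.ofReal |f y - f x| ≤ ∑' n : ℕ, ENNReal.ofReal (aSeq f nh x y n) := by
    refine le_of_tendsto (ENNReal.tendsto_ofReal habs) ?_
    filter_upwards with N
    calc ENNReal.ofReal |f (D (N+nh) y) - f (D (N+nh) x)|
        ≤ ENNReal.ofReal (∑ n ∈ Finset.range (N+1), aSeq f nh x y n) :=
          ENNReal.ofReal_le_ofReal (htel N)
      _ = ∑ n ∈ Finset.range (N+1), ENNReal.ofReal (aSeq f nh x y n) :=
          ENNReal.ofReal_sum_of_nonneg (fun i _ => aSeq_nonneg f nh x y i)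
      _ ≤ ∑' n : ℕ, ENNReal.ofReal (aSeq f nh x y n) := ENNReal.sum_le_tsum _
  -- Step E: Hölder
  set q := p/(p-1) with hq
  have hpq : p.HolderConjugate q := Real.HolderConjugate.conjExponent hp
  have hq_pos : 0 < q := hpq.symm.pos
  set g1 : ℕ → ℝ≥0∞ := fun n => ENNReal.ofReal (((n:ℝ)+1)^(-α)) with hg1
  set g2 : ℕ → ℝ≥0∞ := fun n => ENNReal.ofReal (((n:ℝ)+1)^α * aSeq f nh x y n) with hg2
  have hnpos : ∀ n : ℕ, (0:ℝ) < (n:ℝ)+1 := fun n => by positivity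
  have hfactor : ∀ n : ℕ, ENNReal.ofReal (aSeq f nh x y n) = g1 n * g2 n := by
    intro n
    rw [hg1, hg2]
    rw [← ENNReal.ofReal_mul (Real.rpow_nonneg (le_of_lt (hnpos n)) _)]
    congr 1
    rw [← mul_assoc, ← Real.rpow_add (hnpos n)]
    simp
  have hH : ∑' n : ℕ, ENNReal.ofReal (aSeq f nh x y n) ≤
      (∑' n : ℕ, g1 n ^ q)^(1/q) * (∑' n : ℕ, g2 n ^ p)^(1/p) := by
    have hHol := ENNReal.lintegral_mul_le_Lp_mul_Lq (μ := Measure.count) hpq.symm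
      (f := g1) (g := g2) measurable_from_nat.aemeasurable measurable_from_nat.aemeasurable
    simp only [Pi.mul_apply, lintegral_count] at hHol
    calc ∑' n : ℕ, ENNReal.ofReal (aSeq f nh x y n) = ∑' n : ℕ, g1 n * g2 n :=
        tsum_congr hfactor
      _ ≤ _ := hHol
  have hβ : 1 < α * p / (p-1) := by
    have hp1' : (0:ℝ) < p - 1 := by linarith
    rw [lt_div_iff₀ hp1']
    have e2 : (1 - 1/p) * p = p - 1 := by field_simp
    nlinarith [mul_lt_mul_of_pos_right hα hp_pos]
  have hsum : Summable (fun n : ℕ => ((n:ℝ)+1) ^ (-(α*p/(p-1)))) := by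
    have h1 : Summable (fun n : ℕ => (n:ℝ) ^ (-(α*p/(p-1)))) :=
      Real.summable_nat_rpow.mpr (by linarith)
    have h2 := (summable_nat_add_iff 1).mpr h1
    refine h2.congr fun n => ?_
    push_cast
    ring_nf
  have hF1 : (∑' n : ℕ, g1 n ^ q) ^ (1/q) = ENNReal.ofReal (cConst α p) := by
    have e1 : ∀ n : ℕ, g1 n ^ q = ENNReal.ofReal (((n:ℝ)+1)^(-(α*p/(p-1)))) := by
      intro n
      rw [hg1]
      rw [ENNReal.ofReal_rpow_of_nonneg (Real.rpow_nonneg (le_of_lt (hnpos n)) _)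
        (le_of_lt hq_pos)]
      congr 1
      rw [← Real.rpow_mul (le_of_lt (hnpos n))]
      congr 1
      rw [hq]; ring
    rw [tsum_congr e1,
      ← ENNReal.ofReal_tsum_of_nonneg (fun n => Real.rpow_nonneg (le_of_lt (hnpos n)) _) hsum,
      ENNReal.ofReal_rpow_of_nonneg
        (tsum_nonneg (fun n => Real.rpow_nonneg (le_of_lt (hnpos n)) _)) (by positivity)]
    rw [cConst]
    congr 1
    rw [hq, one_div_div]
  have hF2 : (∑' n : ℕ, g2 n ^ p) ^ (1/p) ≤
      ENNReal.ofReal (2^((p-1)/p)) * (Sp f nh α p)^(1/p) := by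
    have e2 : ∀ n : ℕ, g2 n ^ p ≤ ENNReal.ofReal (2^(p-1)) *
        (ENNReal.ofReal (((n:ℝ)+1)^(α*p)) *
          ∑ k ∈ Finset.range (2^(n+nh+1)), ENNReal.ofReal (Inc f (n+nh) k ^ p)) := by
      intro n
      have ha_nn := aSeq_nonneg f nh x y n
      have hw_nn : (0:ℝ) ≤ ((n:ℝ)+1)^α := Real.rpow_nonneg (le_of_lt (hnpos n)) _
      rw [hg2]
      rw [ENNReal.ofReal_rpow_of_nonneg (mul_nonneg hw_nn ha_nn) hp0,
        Real.mul_rpow hw_nn ha_nn, ← Real.rpow_mul (le_of_lt (hnpos n)),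
        ENNReal.ofReal_mul (Real.rpow_nonneg (le_of_lt (hnpos n)) _)]
      calc ENNReal.ofReal (((n:ℝ)+1)^(α*p)) * ENNReal.ofReal (aSeq f nh x y n ^ p)
          ≤ ENNReal.ofReal (((n:ℝ)+1)^(α*p)) * (ENNReal.ofReal (2^(p-1)) *
            ∑ k ∈ Finset.range (2^(n+nh+1)), ENNReal.ofReal (Inc f (n+nh) k ^ p)) :=
            mul_le_mul_right (stepD n) _
        _ = _ := by ring
    have hsum_le : ∑' n : ℕ, g2 n ^ p ≤ ENNReal.ofReal (2^(p-1)) * Sp f nh α p := by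
      calc ∑' n : ℕ, g2 n ^ p ≤ ∑' n : ℕ, ENNReal.ofReal (2^(p-1)) *
          (ENNReal.ofReal (((n:ℝ)+1)^(α*p)) *
            ∑ k ∈ Finset.range (2^(n+nh+1)), ENNReal.ofReal (Inc f (n+nh) k ^ p)) :=
          ENNReal.tsum_le_tsum e2
        _ = ENNReal.ofReal (2^(p-1)) * Sp f nh α p := by
          rw [ENNReal.tsum_mul_left, Sp]
          rfl
    calc (∑' n : ℕ, g2 n ^ p)^(1/p) ≤ (ENNReal.ofReal (2^(p-1)) * Sp f nh α p)^(1/p) :=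
        ENNReal.rpow_le_rpow hsum_le (by positivity)
      _ = ENNReal.ofReal (2^((p-1)/p)) * (Sp f nh α p)^(1/p) := by
        rw [ENNReal.mul_rpow_of_nonneg _ _ (by positivity),
          ENNReal.ofReal_rpow_of_nonneg (by positivity) (by positivity)]
        congr 2
        rw [← Real.rpow_mul (by norm_num : (0:ℝ) ≤ 2)]
        congr 1
        ring
  calc ENNReal.ofReal |f y - f x| ≤ ∑' n : ℕ, ENNReal.ofReal (aSeq f nh x y n) := hC
    _ ≤ (∑' n : ℕ, g1 n ^ q)^(1/q) * (∑' n : ℕ, g2 n ^ p)^(1/p) := hH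
    _ ≤ ENNReal.ofReal (cConst α p) *
        (ENNReal.ofReal (2^((p-1)/p)) * (Sp f nh α p)^(1/p)) := by
        rw [hF1]; exact mul_le_mul_right hF2 _
    _ = ENNReal.ofReal (2 ^ ((p - 1) / p) * cConst α p) * (Sp f nh α p) ^ (1/p) := by
        rw [← mul_assoc,
          mul_comm (ENNReal.ofReal (cConst α p)) (ENNReal.ofReal (2^((p-1)/p))),
          ← ENNReal.ofReal_mul (by positivity : (0:ℝ) ≤ 2^((p-1)/p))]

end FrameSup


/-- Sup-norm bound for the frame increments: for `p > 1`, `α > 1 - 1/p`, `f ∈ C([-1,1])` and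
`h ∈ (0,1]`, with `nh = n(h)` the unique integer with `2^{-nh} ≤ h < 2^{-nh+1}`,
`sup_{u ∈ [0,1]} |T_h^f(u) - T_0^f(u)| ≤ 2^{(p-1)/p} c(α,p) S_p(f,h,α)^{1/p}` in `[0,∞]`. -/
theorem frame_sup_bound (p α : ℝ) (hp : 1 < p) (hα : 1 - 1/p < α)
    (f : ℝ → ℝ) (hf : ContinuousOn f (Set.Icc (-1) 1))
    (h : ℝ) (h0 : 0 < h) (h1 : h ≤ 1)
    (nh : ℕ) (hn1 : (2:ℝ) ^ (-(nh:ℤ)) ≤ h) (hn2 : h < (2:ℝ) ^ (-(nh:ℤ) + 1)) :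
    (⨆ u : Set.Icc (0:ℝ) 1, ENNReal.ofReal |f (h - 1 + u) - f (-1 + u)|) ≤
      ENNReal.ofReal (2 ^ ((p - 1) / p) * cConst α p) * (Sp f nh α p) ^ (1/p) := by
  apply iSup_le
  rintro ⟨u, hu0, hu1⟩
  have hkey := FrameSup.key p α hp hα f hf h h0 nh hn1 hn2 (-1 + u) (h - 1 + u)
    (by linarith) (by linarith) (by ring)
  exact hkey
end

section
/- Let p > 1, α > 1 − 1/p, f ∈ C([−1,1],ℝ) and h ∈ (0,1]. Then V_p(T_h^f − T_0^f) ≤ 4 c(α,p) · S_p(f,h,α)^{1/p} (as an inequality in [0,∞]); equivalently, for every finite dissection 0 = t_0 < t_1 < ... < t_n = 1 of [0,1], Σ_{j=0}^{n−1} |(T_h^f − T_0^f)(t_{j+1}) − (T_h^f − T_0^f)(t_j)|^p ≤ 4^p c(α,p)^p S_p(f,h,α). -/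
open MeasureTheory ProbabilityTheory Filter
open scoped ENNReal NNReal

/-- The `p`-variation functional of a path `g` (restricted to `[0,1]` via dissections
`0 = t 0 < t 1 < ... < t n = 1`), with values in `[0,∞]`. -/
noncomputable def pVar {V : Type*} [NormedAddCommGroup V] (p : ℝ) (g : ℝ → V) : ℝ≥0∞ :=
  ⨆ (n : ℕ) (t : Fin (n+1) → ℝ) (_ : StrictMono t) (_ : t 0 = 0) (_ : t (Fin.last n) = 1),
    (∑ i : Fin n, (ENNReal.ofReal ‖g (t i.succ) - g (t i.castSucc)‖) ^ p) ^ p⁻¹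

noncomputable def dyadTerm (f : ℝ → ℝ) (p : ℝ) (m : ℕ) (k : ℕ) : ℝ≥0∞ :=
  ENNReal.ofReal (|f (((k : ℝ) + 1) / 2 ^ m - 1) - f ((k : ℝ) / 2 ^ m - 1)| ^ p)

noncomputable def Omega (f : ℝ → ℝ) (nh : ℕ) (α p : ℝ) (a b : ℝ) : ℝ≥0∞ :=
  ∑' q : ℕ, ENNReal.ofReal (((q : ℝ) + 1) ^ (α * p)) *
    ∑ k ∈ Finset.range (2 ^ (q + nh + 1)),
      (if a ≤ (k : ℝ) / 2 ^ (q + nh) - 1 ∧ ((k : ℝ) + 1) / 2 ^ (q + nh) - 1 ≤ b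
       then dyadTerm f p (q + nh) k else 0)

lemma Omega_le_Sp (f : ℝ → ℝ) (nh : ℕ) (α p a b : ℝ) :
    Omega f nh α p a b ≤ Sp f nh α p := by
  refine ENNReal.tsum_le_tsum fun q => ?_
  refine mul_le_mul_right (Finset.sum_le_sum fun k _ => ?_) _
  split_ifs with hk
  · exact le_rfl
  · exact zero_le

lemma Omega_mono (f : ℝ → ℝ) (nh : ℕ) (α p : ℝ) {a b a' b' : ℝ} (ha : a' ≤ a) (hb : b ≤ b') :
    Omega f nh α p a b ≤ Omega f nh α p a' b' := by
  refine ENNReal.tsum_le_tsum fun q => ?_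
  refine mul_le_mul_right (Finset.sum_le_sum fun k _ => ?_) _
  split_ifs with h1 h2 h2
  · exact le_rfl
  · exact absurd ⟨le_trans ha h1.1, le_trans h1.2 hb⟩ h2
  · exact zero_le
  · exact zero_le

lemma Omega_superadd (f : ℝ → ℝ) (nh : ℕ) (α p : ℝ) {a c b : ℝ} (hac : a ≤ c) (hcb : c ≤ b) :
    Omega f nh α p a c + Omega f nh α p c b ≤ Omega f nh α p a b := by
  rw [Omega, Omega, Omega, ← ENNReal.tsum_add]
  refine ENNReal.tsum_le_tsum fun q => ?_
  rw [← mul_add, ← Finset.sum_add_distrib]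
  refine mul_le_mul_right (Finset.sum_le_sum fun k _ => ?_) _
  have hlt : (k : ℝ) / 2 ^ (q + nh) - 1 < ((k : ℝ) + 1) / 2 ^ (q + nh) - 1 := by
    have h2p : (0:ℝ) < 2 ^ (q + nh) := by positivity
    have : (k : ℝ) / 2 ^ (q + nh) < ((k : ℝ) + 1) / 2 ^ (q + nh) := by
      apply div_lt_div_of_pos_right _ h2p
      linarith
    linarith
  by_cases h1 : a ≤ (k : ℝ) / 2 ^ (q + nh) - 1 ∧ ((k : ℝ) + 1) / 2 ^ (q + nh) - 1 ≤ c
  · by_cases h2 : c ≤ (k : ℝ) / 2 ^ (q + nh) - 1 ∧ ((k : ℝ) + 1) / 2 ^ (q + nh) - 1 ≤ b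
    · exact absurd (lt_of_lt_of_le hlt (le_trans h1.2 h2.1)) (lt_irrefl _)
    · have h3 : a ≤ (k : ℝ) / 2 ^ (q + nh) - 1 ∧ ((k : ℝ) + 1) / 2 ^ (q + nh) - 1 ≤ b :=
        ⟨h1.1, le_trans h1.2 hcb⟩
      simp only [if_pos h1, if_neg h2, if_pos h3, add_zero, le_refl]
  · by_cases h2 : c ≤ (k : ℝ) / 2 ^ (q + nh) - 1 ∧ ((k : ℝ) + 1) / 2 ^ (q + nh) - 1 ≤ b
    · have h3 : a ≤ (k : ℝ) / 2 ^ (q + nh) - 1 ∧ ((k : ℝ) + 1) / 2 ^ (q + nh) - 1 ≤ b :=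
        ⟨le_trans hac h2.1, h2.2⟩
      simp only [if_neg h1, if_pos h2, if_pos h3, zero_add, le_refl]
    · simp only [if_neg h1, if_neg h2, add_zero]
      exact zero_le
lemma tsum_holder {p q : ℝ} (hpq : Real.HolderConjugate p q) (u v : ℕ → ℝ≥0∞) :
    ∑' n, u n * v n ≤ (∑' n, u n ^ p) ^ (1/p) * (∑' n, v n ^ q) ^ (1/q) := by
  rw [ENNReal.tsum_eq_iSup_sum]
  refine iSup_le fun s => le_trans (ENNReal.inner_le_Lp_mul_Lq (s := s) (f := u) (g := v) hpq) ?_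
  exact mul_le_mul'
    (ENNReal.rpow_le_rpow (ENNReal.sum_le_tsum s) hpq.one_div_pos.le)
    (ENNReal.rpow_le_rpow (ENNReal.sum_le_tsum s) hpq.symm.one_div_pos.le)

lemma int_two_cases {A B : ℤ} (h1 : A ≤ B) (h2 : B ≤ A + 1) : B = A ∨ B = A + 1 := by omega

set_option maxHeartbeats 2000000 in
lemma chain_bound (p α : ℝ) (hp : 1 < p) (hα : 1 - 1/p < α)
    (f : ℝ → ℝ) (hf : ContinuousOn f (Set.Icc (-1) 1)) (nh : ℕ)
    {a b : ℝ} (ha : -1 ≤ a) (hab : a ≤ b) (hb : b ≤ 1)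
    (hba : b - a < 2 * ((2:ℝ) ^ nh)⁻¹) :
    ENNReal.ofReal (|f b - f a| ^ p) ≤
      ENNReal.ofReal (cConst α p) ^ p * (2:ℝ≥0∞) ^ p * Omega f nh α p a b := by
  have hp0 : 0 < p := lt_trans one_pos hp
  rcases eq_or_lt_of_le hab with rfl | hlt
  · simp [Real.zero_rpow (ne_of_gt hp0)]
  -- dyadic approximations
  have h2m : ∀ m : ℕ, (0:ℝ) < 2 ^ m := fun m => by positivity
  set c : ℕ → ℤ := fun m => ⌈(2:ℝ) ^ m * (a+1)⌉ with hc
  set d : ℕ → ℤ := fun m => ⌊(2:ℝ) ^ m * (b+1)⌋ with hd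
  set x : ℕ → ℝ := fun m => (c m : ℝ) / 2 ^ m - 1 with hx
  set y : ℕ → ℝ := fun m => (d m : ℝ) / 2 ^ m - 1 with hy
  have hxa : ∀ m, a ≤ x m := by
    intro m
    have h := Int.le_ceil ((2:ℝ)^m * (a+1))
    have h2 : a + 1 ≤ (c m : ℝ) / 2 ^ m := by
      rw [le_div_iff₀ (h2m m)]; nlinarith [h]
    simp only [hx]; linarith
  have hax : ∀ m, x m < a + ((2:ℝ)^m)⁻¹ := by
    intro m
    have h := Int.ceil_lt_add_one ((2:ℝ)^m * (a+1))
    have h2 : (c m : ℝ) / 2 ^ m < (a + 1) + ((2:ℝ)^m)⁻¹ := by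
      rw [div_lt_iff₀ (h2m m)]
      have : ((2:ℝ)^m)⁻¹ * 2^m = 1 := inv_mul_cancel₀ (ne_of_gt (h2m m))
      nlinarith [h]
    simp only [hx]; linarith
  have hyb : ∀ m, y m ≤ b := by
    intro m
    have h := Int.floor_le ((2:ℝ)^m * (b+1))
    have h2 : (d m : ℝ) / 2 ^ m ≤ b + 1 := by
      rw [div_le_iff₀ (h2m m)]; nlinarith [h]
    simp only [hy]; linarith
  have hby : ∀ m, b - ((2:ℝ)^m)⁻¹ < y m := by
    intro m
    have h := Int.sub_one_lt_floor ((2:ℝ)^m * (b+1))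
    have h2 : (b + 1) - ((2:ℝ)^m)⁻¹ < (d m : ℝ) / 2 ^ m := by
      rw [lt_div_iff₀ (h2m m)]
      have : ((2:ℝ)^m)⁻¹ * 2^m = 1 := inv_mul_cancel₀ (ne_of_gt (h2m m))
      nlinarith [h]
    simp only [hy]; linarith
  have hcc : ∀ m, 2 * c m - 1 ≤ c (m+1) ∧ c (m+1) ≤ 2 * c m := by
    intro m
    constructor
    · have h1 : (c m : ℝ) < 2^m * (a+1) + 1 := Int.ceil_lt_add_one _
      have h2 : (2 * c m - 2 : ℤ) < c (m+1) := by
        apply Int.lt_ceil.2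
        push_cast
        rw [pow_succ]
        nlinarith
      omega
    · apply Int.ceil_le.2
      push_cast
      have h2 : (2:ℝ)^m * (a+1) ≤ c m := Int.le_ceil _
      rw [pow_succ]
      nlinarith
  have hdd : ∀ m, 2 * d m ≤ d (m+1) ∧ d (m+1) ≤ 2 * d m + 1 := by
    intro m
    constructor
    · apply Int.le_floor.2
      push_cast
      have h2 : (d m : ℝ) ≤ (2:ℝ)^m * (b+1) := Int.floor_le _
      rw [pow_succ]
      nlinarith
    · have h1 : (2:ℝ)^m * (b+1) - 1 < d m := Int.sub_one_lt_floor _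
      have h2 : d (m+1) < 2 * d m + 2 := by
        apply Int.floor_lt.2
        push_cast
        rw [pow_succ]
        nlinarith
      omega
  have hxmono : ∀ m, x (m+1) ≤ x m := by
    intro m
    have h1 : (c (m+1) : ℝ) ≤ 2 * c m := by exact_mod_cast (hcc m).2
    simp only [hx]
    have : (c (m+1) : ℝ) / 2 ^ (m+1) ≤ (c m : ℝ) / 2 ^ m := by
      rw [div_le_div_iff₀ (h2m (m+1)) (h2m m), pow_succ]
      nlinarith [h2m m]
    linarith
  have hymono : ∀ m, y m ≤ y (m+1) := by
    intro m
    have h1 : 2 * (d m : ℝ) ≤ d (m+1) := by exact_mod_cast (hdd m).1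
    simp only [hy]
    have : (d m : ℝ) / 2 ^ m ≤ (d (m+1) : ℝ) / 2 ^ (m+1) := by
      rw [div_le_div_iff₀ (h2m m) (h2m (m+1)), pow_succ]
      nlinarith [h2m m]
    linarith
  have hxanti : ∀ i j, i ≤ j → x j ≤ x i :=
    fun i j hij => antitone_nat_of_succ_le hxmono hij
  have hymon : ∀ i j, i ≤ j → y i ≤ y j :=
    fun i j hij => monotone_nat_of_le_succ hymono hij
  -- existence of a starting level
  have hQex : ∃ j : ℕ, c (nh + j) ≤ d (nh + j) := by
    obtain ⟨N, hN⟩ := exists_pow_lt_of_lt_one (sub_pos.2 hlt) (by norm_num : (1:ℝ)/2 < 1)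
    refine ⟨N, ?_⟩
    have hxN := hax (nh + N)
    have hinv : ((2:ℝ)^(nh+N))⁻¹ ≤ ((1:ℝ)/2)^N := by
      rw [div_pow, one_pow, one_div]
      gcongr
      · norm_num
      · exact Nat.le_add_left _ _
    have hxb' : x (nh + N) < b := by
      have h4 : a + ((2:ℝ) ^ (nh + N))⁻¹ ≤ a + ((1:ℝ)/2) ^ N := by linarith
      have h5 : a + ((1:ℝ)/2) ^ N < b := by linarith
      exact lt_trans (lt_of_lt_of_le hxN h4) h5
    have h3 : (c (nh+N) : ℝ) / 2 ^ (nh+N) ≤ b + 1 := by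
      simp only [hx] at hxb'; linarith
    have h6 : (c (nh+N) : ℝ) ≤ 2^(nh+N) * (b+1) := by
      rw [mul_comm, ← div_le_iff₀ (h2m _)]; exact h3
    exact Int.le_floor.2 h6
  set s : ℕ := Nat.find hQex with hs
  set m1 : ℕ := nh + s with hm1def
  have hm1 : c m1 ≤ d m1 := Nat.find_spec hQex
  have hkey : (2:ℝ)^m1 * (b - a) < 2 := by
    rcases Nat.eq_zero_or_pos s with h0 | hpos
    · have : m1 = nh := by omega
      rw [this]
      calc (2:ℝ)^nh * (b-a) < 2^nh * (2 * ((2:ℝ)^nh)⁻¹) := by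
            apply mul_lt_mul_of_pos_left hba (h2m nh)
        _ = 2 := by field_simp
    · have hs' : s - 1 < s := by omega
      have hnot := Nat.find_min hQex hs'
      set m' : ℕ := nh + (s - 1) with hm'
      have hm'1 : m' + 1 = m1 := by omega
      have hdc : d m' < c m' := by omega
      have h1 : (2:ℝ)^m' * (b+1) < c m' := by
        have := Int.floor_le ((2:ℝ)^m' * (b+1))
        have hlt2 : (d m' : ℝ) < c m' := by exact_mod_cast hdc
        have := Int.lt_floor_add_one ((2:ℝ)^m' * (b+1))
        have hle : (d m' : ℝ) + 1 ≤ c m' := by exact_mod_cast hdc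
        linarith
      have h2 : (c m' : ℝ) - 1 < (2:ℝ)^m' * (a+1) := by
        have := Int.ceil_lt_add_one ((2:ℝ)^m' * (a+1))
        linarith
      have h3 : (2:ℝ)^m' * (b - a) < 1 := by nlinarith
      rw [← hm'1, pow_succ]
      nlinarith [h2m m']
  have hdc1 : d m1 ≤ c m1 + 1 := by
    have h1 : (d m1 : ℝ) ≤ 2^m1 * (b+1) := Int.floor_le _
    have h2 : (2:ℝ)^m1 * (a+1) ≤ c m1 := Int.le_ceil _
    have : (d m1 : ℝ) < (c m1 : ℝ) + 2 := by nlinarith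
    have : d m1 < c m1 + 2 := by exact_mod_cast this
    omega
  have hc0 : ∀ m, 0 ≤ c m := fun m => Int.ceil_nonneg (by nlinarith [h2m m])
  have hd0 : ∀ m, 0 ≤ d m := fun m => Int.le_floor.2 (by push_cast; nlinarith [h2m m])
  have hxym1 : x m1 ≤ y m1 := by
    have h1 : (c m1 : ℝ) ≤ d m1 := by exact_mod_cast hm1
    simp only [hx, hy]
    have : (c m1 : ℝ) / 2^m1 ≤ (d m1 : ℝ) / 2^m1 := by gcongr
    linarith
  have hxb : ∀ n, x (m1 + n) ≤ b := fun n =>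
    le_trans (le_trans (hxanti m1 (m1+n) (Nat.le_add_right _ _)) hxym1) (hyb m1)
  have hya : ∀ n, a ≤ y (m1 + n) :=
    fun n => le_trans (le_trans (hxa m1) hxym1) (hymon m1 (m1+n) (Nat.le_add_right _ _))
  have hhalf : Tendsto (fun n : ℕ => ((1:ℝ)/2)^n) atTop (nhds 0) := by
    apply tendsto_pow_atTop_nhds_zero_of_lt_one <;> norm_num
  have hinvle : ∀ n : ℕ, ((2:ℝ)^(m1+n))⁻¹ ≤ ((1:ℝ)/2)^n := by
    intro n
    rw [div_pow, one_pow, one_div]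
    gcongr
    · norm_num
    · exact Nat.le_add_left _ _
  have hXlim : Tendsto (fun n => x (m1 + n)) atTop (nhds a) := by
    have hup : Tendsto (fun n : ℕ => a + ((1:ℝ)/2)^n) atTop (nhds a) := by
      simpa using tendsto_const_nhds.add hhalf
    refine tendsto_of_tendsto_of_tendsto_of_le_of_le (g := fun _ => a)
      tendsto_const_nhds hup (fun n => hxa _) (fun n => ?_)
    have := hax (m1+n)
    have := hinvle n
    linarith
  have hYlim : Tendsto (fun n => y (m1 + n)) atTop (nhds b) := by
    have hlo : Tendsto (fun n : ℕ => b - ((1:ℝ)/2)^n) atTop (nhds b) := by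
      simpa using tendsto_const_nhds.sub hhalf
    refine tendsto_of_tendsto_of_tendsto_of_le_of_le (h := fun _ => b)
      hlo tendsto_const_nhds (fun n => ?_) (fun n => hyb _)
    have := hby (m1+n)
    have := hinvle n
    linarith
  have haI : a ∈ Set.Icc (-1:ℝ) 1 := ⟨ha, le_trans hab hb⟩
  have hbI : b ∈ Set.Icc (-1:ℝ) 1 := ⟨le_trans ha hab, hb⟩
  have hfX : Tendsto (fun n => f (x (m1+n))) atTop (nhds (f a)) := by
    refine ((hf a haI).tendsto).comp ?_
    refine tendsto_nhdsWithin_of_tendsto_nhds_of_eventually_within _ hXlim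
      (Eventually.of_forall fun n => ?_)
    exact ⟨le_trans ha (hxa _), le_trans (hxb n) hb⟩
  have hfY : Tendsto (fun n => f (y (m1+n))) atTop (nhds (f b)) := by
    refine ((hf b hbI).tendsto).comp ?_
    refine tendsto_nhdsWithin_of_tendsto_nhds_of_eventually_within _ hYlim
      (Eventually.of_forall fun n => ?_)
    exact ⟨le_trans ha (hya n), le_trans (hyb _) hb⟩
  -- the chain increments
  set D : ℕ → ℝ≥0∞ := fun n => match n with
    | 0 => ENNReal.ofReal |f (y m1) - f (x m1)|
    | Nat.succ i => ENNReal.ofReal |f (y (m1+i+1)) - f (y (m1+i))| +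
        ENNReal.ofReal |f (x (m1+i)) - f (x (m1+i+1))| with hD
  have hpartial : ∀ N, ENNReal.ofReal |f (y (m1+N)) - f (x (m1+N))| ≤
      ∑ n ∈ Finset.range (N+1), D n := by
    intro N
    induction N with
    | zero => rw [Finset.sum_range_one]; exact le_rfl
    | succ N ih =>
      rw [Finset.sum_range_succ]
      have tri : |f (y (m1+N+1)) - f (x (m1+N+1))| ≤ |f (y (m1+N)) - f (x (m1+N))| +
          (|f (y (m1+N+1)) - f (y (m1+N))| + |f (x (m1+N)) - f (x (m1+N+1))|) := by
        calc |f (y (m1+N+1)) - f (x (m1+N+1))|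
            = |(f (y (m1+N)) - f (x (m1+N))) + ((f (y (m1+N+1)) - f (y (m1+N))) +
                (f (x (m1+N)) - f (x (m1+N+1))))| := by congr 1; ring
          _ ≤ |f (y (m1+N)) - f (x (m1+N))| + |(f (y (m1+N+1)) - f (y (m1+N))) +
                (f (x (m1+N)) - f (x (m1+N+1)))| := abs_add_le _ _
          _ ≤ _ := add_le_add_right (abs_add_le _ _) _
      calc ENNReal.ofReal |f (y (m1+(N+1))) - f (x (m1+(N+1)))|
          ≤ ENNReal.ofReal (|f (y (m1+N)) - f (x (m1+N))| +
              (|f (y (m1+N+1)) - f (y (m1+N))| + |f (x (m1+N)) - f (x (m1+N+1))|)) :=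
            ENNReal.ofReal_le_ofReal tri
        _ = ENNReal.ofReal |f (y (m1+N)) - f (x (m1+N))| +
              (ENNReal.ofReal |f (y (m1+N+1)) - f (y (m1+N))| +
               ENNReal.ofReal |f (x (m1+N)) - f (x (m1+N+1))|) := by
            rw [ENNReal.ofReal_add (abs_nonneg _) (add_nonneg (abs_nonneg _) (abs_nonneg _)),
              ENNReal.ofReal_add (abs_nonneg _) (abs_nonneg _)]
        _ ≤ ∑ n ∈ Finset.range (N+1), D n + D (N+1) := add_le_add ih le_rfl
  have hfin : Tendsto (fun N => ENNReal.ofReal |f (y (m1+N)) - f (x (m1+N))|) atTop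
      (nhds (ENNReal.ofReal |f b - f a|)) :=
    (ENNReal.continuous_ofReal.tendsto _).comp ((hfY.sub hfX).abs)
  have hstep1 : ENNReal.ofReal |f b - f a| ≤ ∑' n, D n :=
    le_of_tendsto hfin (Eventually.of_forall fun N =>
      le_trans (hpartial N) (ENNReal.sum_le_tsum _))
  -- Hölder
  set qc : ℝ := p / (p - 1) with hqc
  have hp1 : 0 < p - 1 := by linarith
  have hpq : p.HolderConjugate qc := Real.HolderConjugate.conjExponent hp
  have hq0 : 0 < qc := div_pos hp0 hp1
  set w : ℕ → ℝ≥0∞ := fun n => ENNReal.ofReal (((n:ℝ)+1) ^ (-α)) with hw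
  set W : ℕ → ℝ≥0∞ := fun n => ENNReal.ofReal (((n:ℝ)+1) ^ α) with hW
  have hn1pos : ∀ n : ℕ, (0:ℝ) < (n:ℝ)+1 := fun n => by positivity
  have hwW : ∀ n, D n = w n * (W n * D n) := by
    intro n
    rw [← mul_assoc, hw, hW, ← ENNReal.ofReal_mul (Real.rpow_nonneg (hn1pos n).le _),
      ← Real.rpow_add (hn1pos n), neg_add_cancel, Real.rpow_zero, ENNReal.ofReal_one, one_mul]
  have hsummable : Summable (fun n : ℕ => ((n:ℝ)+1) ^ (-(α * p / (p-1)))) := by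
    have hr : 1 < α * p / (p-1) := by
      rw [lt_div_iff₀ hp1]
      have hm := mul_lt_mul_of_pos_right hα hp0
      have he : (1 - 1/p) * p = p - 1 := by field_simp
      linarith [hm, he]
    have h1 : Summable (fun n : ℕ => ((n:ℝ)) ^ (-(α * p / (p-1)))) :=
      Real.summable_nat_rpow.2 (by linarith)
    refine ((summable_nat_add_iff 1).2 h1).congr fun n => ?_
    push_cast
    ring_nf
  have hCq : (∑' n, w n ^ qc) ^ (1/qc) = ENNReal.ofReal (cConst α p) := by
    have h1 : ∀ n : ℕ, w n ^ qc = ENNReal.ofReal (((n:ℝ)+1) ^ (-(α * p / (p-1)))) := by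
      intro n
      rw [hw, ENNReal.ofReal_rpow_of_nonneg (Real.rpow_nonneg (hn1pos n).le _) hq0.le,
        ← Real.rpow_mul (hn1pos n).le]
      congr 1
      rw [hqc]; ring
    rw [tsum_congr h1,
      ← ENNReal.ofReal_tsum_of_nonneg (fun n => Real.rpow_nonneg (hn1pos n).le _) hsummable,
      ENNReal.ofReal_rpow_of_nonneg
        (tsum_nonneg fun n => Real.rpow_nonneg (hn1pos n).le _) (le_of_lt (by positivity))]
    show ENNReal.ofReal ((∑' n : ℕ, ((n:ℝ)+1) ^ (-(α * p / (p-1)))) ^ ((1:ℝ)/qc)) =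
      ENNReal.ofReal (cConst α p)
    congr 1
    rw [hqc, one_div_div]
    rfl
  have hstep2 : ∑' n, D n ≤
      ENNReal.ofReal (cConst α p) * (∑' n, (W n * D n) ^ p) ^ (1/p) := by
    calc ∑' n, D n = ∑' n, w n * (W n * D n) := tsum_congr hwW
      _ ≤ (∑' n, w n ^ qc) ^ (1/qc) * (∑' n, (W n * D n) ^ p) ^ (1/p) := by
          simpa using tsum_holder hpq.symm w (fun n => W n * D n)
      _ = _ := by rw [hCq]
  -- restricted dyadic sums
  set Sres : ℕ → ℝ≥0∞ := fun q =>
    ∑ k ∈ Finset.range (2 ^ (q + nh + 1)),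
      (if a ≤ (k : ℝ) / 2 ^ (q + nh) - 1 ∧ ((k : ℝ) + 1) / 2 ^ (q + nh) - 1 ≤ b
       then dyadTerm f p (q + nh) k else 0) with hSres
  have hsingle : ∀ q k : ℕ, a ≤ (k:ℝ)/2^(q+nh) - 1 → ((k:ℝ)+1)/2^(q+nh) - 1 ≤ b →
      dyadTerm f p (q+nh) k ≤ Sres q := by
    intro q k h1 h2
    have hkmem : k ∈ Finset.range (2 ^ (q + nh + 1)) := by
      have hb2 : ((k:ℝ)+1)/2^(q+nh) ≤ 2 := by linarith
      have h3 : ((k:ℝ)+1) ≤ 2 * 2^(q+nh) := by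
        rw [div_le_iff₀ (h2m (q+nh))] at hb2; linarith
      have hnat : ((k+1:ℕ):ℝ) ≤ ((2^(q+nh+1) : ℕ) : ℝ) := by push_cast; rw [pow_succ]; linarith
      have : k + 1 ≤ 2^(q+nh+1) := by exact_mod_cast hnat
      exact Finset.mem_range.2 (by omega)
    have hss := Finset.single_le_sum (f := fun k' : ℕ =>
      if a ≤ (k' : ℝ) / 2 ^ (q + nh) - 1 ∧ ((k' : ℝ) + 1) / 2 ^ (q + nh) - 1 ≤ b
      then dyadTerm f p (q + nh) k' else 0) (fun i _ => zero_le) hkmem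
    calc dyadTerm f p (q+nh) k
        = (if a ≤ (k:ℝ)/2^(q+nh) - 1 ∧ ((k:ℝ)+1)/2^(q+nh) - 1 ≤ b
           then dyadTerm f p (q+nh) k else 0) := (if_pos ⟨h1, h2⟩).symm
      _ ≤ Sres q := hss
  have hone_le : (1:ℝ≥0∞) ≤ (2:ℝ≥0∞)^p := by
    calc (1:ℝ≥0∞) = (2:ℝ≥0∞) ^ (0:ℝ) := ENNReal.rpow_zero.symm
      _ ≤ (2:ℝ≥0∞) ^ p := ENNReal.rpow_le_rpow_of_exponent_le (by norm_num) hp0.le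
  have hofReal_abs_rpow : ∀ u v : ℝ,
      (ENNReal.ofReal |u - v|) ^ p = ENNReal.ofReal (|u - v| ^ p) :=
    fun u v => ENNReal.ofReal_rpow_of_nonneg (abs_nonneg _) hp0.le
  -- x-side steps
  have hxstep : ∀ i : ℕ, (ENNReal.ofReal |f (x (m1+i)) - f (x (m1+i+1))|) ^ p ≤ Sres (s+(i+1)) := by
    intro i
    have hccI := hcc (m1+i)
    have h2' : c (m1+i+1) ≤ (2 * c (m1+i) - 1) + 1 := by
      rw [sub_add_cancel]; exact hccI.2
    have hd2 : c (m1+i+1) = 2 * c (m1+i) ∨ c (m1+i+1) = 2 * c (m1+i) - 1 := by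
      rcases int_two_cases hccI.1 h2' with hcase' | hcase'
      · exact Or.inr hcase'
      · exact Or.inl (by rw [hcase', sub_add_cancel])
    rcases hd2 with hcase | hcase
    · have hxx : x (m1+i+1) = x (m1+i) := by
        show (c (m1+i+1) : ℝ)/2^(m1+i+1) - 1 = (c (m1+i) : ℝ)/2^(m1+i) - 1
        rw [hcase]; push_cast; rw [pow_succ]; field_simp
      rw [hxx, sub_self, abs_zero, ENNReal.ofReal_zero, ENNReal.zero_rpow_of_pos hp0]
      exact zero_le
    · set k : ℕ := (c (m1+i+1)).toNat with hk
      have hkc : (k:ℝ) = (c (m1+i+1) : ℝ) := by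
        have := Int.toNat_of_nonneg (hc0 (m1+i+1))
        exact_mod_cast congrArg (Int.cast : ℤ → ℝ) this
      have hleft : (k:ℝ)/2^(m1+i+1) - 1 = x (m1+i+1) := by rw [hkc]
      have hright : ((k:ℝ)+1)/2^(m1+i+1) - 1 = x (m1+i) := by
        rw [hkc]
        show ((c (m1+i+1):ℝ)+1)/2^(m1+i+1) - 1 = (c (m1+i) : ℝ)/2^(m1+i) - 1
        rw [hcase]; push_cast; rw [pow_succ]; field_simp; ring
      have h1 : a ≤ (k:ℝ)/2^(m1+i+1) - 1 := hleft ▸ hxa (m1+i+1)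
      have h2 : ((k:ℝ)+1)/2^(m1+i+1) - 1 ≤ b := hright ▸ hxb i
      have hqe : (s+(i+1)) + nh = m1+i+1 := by rw [hm1def]; ring
      have hs1 := hsingle (s+(i+1)) k
      rw [hqe] at hs1
      have hdt : dyadTerm f p (m1+i+1) k =
          (ENNReal.ofReal |f (x (m1+i)) - f (x (m1+i+1))|) ^ p := by
        show ENNReal.ofReal (|f (((k:ℝ)+1)/2^(m1+i+1) - 1) - f ((k:ℝ)/2^(m1+i+1) - 1)| ^ p) = _
        rw [hleft, hright, hofReal_abs_rpow]
      exact le_trans (le_of_eq hdt.symm) (hs1 h1 h2)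
  -- y-side steps
  have hystep : ∀ i : ℕ, (ENNReal.ofReal |f (y (m1+i+1)) - f (y (m1+i))|) ^ p ≤ Sres (s+(i+1)) := by
    intro i
    have hddI := hdd (m1+i)
    rcases int_two_cases hddI.1 hddI.2 with hcase | hcase
    · have hyy : y (m1+i+1) = y (m1+i) := by
        show (d (m1+i+1) : ℝ)/2^(m1+i+1) - 1 = (d (m1+i) : ℝ)/2^(m1+i) - 1
        rw [hcase]; push_cast; rw [pow_succ]; field_simp
      rw [hyy, sub_self, abs_zero, ENNReal.ofReal_zero, ENNReal.zero_rpow_of_pos hp0]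
      exact zero_le
    · set k : ℕ := (2 * d (m1+i)).toNat with hk
      have hkc : (k:ℝ) = 2 * (d (m1+i) : ℝ) := by
        have h0 : (0:ℤ) ≤ 2 * d (m1+i) := by have := hd0 (m1+i); omega
        have := Int.toNat_of_nonneg h0
        exact_mod_cast congrArg (Int.cast : ℤ → ℝ) this
      have hleft : (k:ℝ)/2^(m1+i+1) - 1 = y (m1+i) := by
        rw [hkc]
        show 2 * (d (m1+i):ℝ)/2^(m1+i+1) - 1 = (d (m1+i) : ℝ)/2^(m1+i) - 1
        rw [pow_succ]; field_simp
      have hright : ((k:ℝ)+1)/2^(m1+i+1) - 1 = y (m1+i+1) := by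
        rw [hkc]
        show (2 * (d (m1+i):ℝ)+1)/2^(m1+i+1) - 1 = (d (m1+i+1) : ℝ)/2^(m1+i+1) - 1
        rw [hcase]; push_cast; ring_nf
      have h1 : a ≤ (k:ℝ)/2^(m1+i+1) - 1 := hleft ▸ hya i
      have h2 : ((k:ℝ)+1)/2^(m1+i+1) - 1 ≤ b := hright ▸ hyb (m1+i+1)
      have hqe : (s+(i+1)) + nh = m1+i+1 := by rw [hm1def]; ring
      have hs1 := hsingle (s+(i+1)) k
      rw [hqe] at hs1
      have hdt : dyadTerm f p (m1+i+1) k =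
          (ENNReal.ofReal |f (y (m1+i+1)) - f (y (m1+i))|) ^ p := by
        show ENNReal.ofReal (|f (((k:ℝ)+1)/2^(m1+i+1) - 1) - f ((k:ℝ)/2^(m1+i+1) - 1)| ^ p) = _
        rw [hleft, hright, hofReal_abs_rpow]
      exact le_trans (le_of_eq hdt.symm) (hs1 h1 h2)
  -- level m1 step
  have hstep0 : D 0 ^ p ≤ Sres s := by
    rcases int_two_cases hm1 hdc1 with hcase | hcase
    · have hyy : y m1 = x m1 := by
        show (d m1 : ℝ)/2^m1 - 1 = (c m1 : ℝ)/2^m1 - 1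
        rw [hcase]
      show (ENNReal.ofReal |f (y m1) - f (x m1)|) ^ p ≤ Sres s
      rw [hyy, sub_self, abs_zero, ENNReal.ofReal_zero, ENNReal.zero_rpow_of_pos hp0]
      exact zero_le
    · set k : ℕ := (c m1).toNat with hk
      have hkc : (k:ℝ) = (c m1 : ℝ) := by
        have := Int.toNat_of_nonneg (hc0 m1)
        exact_mod_cast congrArg (Int.cast : ℤ → ℝ) this
      have hleft : (k:ℝ)/2^m1 - 1 = x m1 := by rw [hkc]
      have hright : ((k:ℝ)+1)/2^m1 - 1 = y m1 := by
        rw [hkc]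
        show ((c m1:ℝ)+1)/2^m1 - 1 = (d m1 : ℝ)/2^m1 - 1
        rw [hcase]; push_cast; ring
      have h1 : a ≤ (k:ℝ)/2^m1 - 1 := hleft ▸ hxa m1
      have h2 : ((k:ℝ)+1)/2^m1 - 1 ≤ b := hright ▸ hyb m1
      have hqe : s + nh = m1 := by rw [hm1def]; ring
      have hs1 := hsingle s k
      rw [hqe] at hs1
      have hdt : dyadTerm f p m1 k = D 0 ^ p := by
        show ENNReal.ofReal (|f (((k:ℝ)+1)/2^m1 - 1) - f ((k:ℝ)/2^m1 - 1)| ^ p) = _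
        rw [hleft, hright]
        show _ = (ENNReal.ofReal |f (y m1) - f (x m1)|) ^ p
        rw [hofReal_abs_rpow]
      exact le_trans (le_of_eq hdt.symm) (hs1 h1 h2)
  -- per-index bound
  have hDn : ∀ n, D n ^ p ≤ (2:ℝ≥0∞)^p * Sres (s+n) := by
    intro n
    match n with
    | 0 => exact le_trans hstep0 (le_mul_of_one_le_left (zero_le) hone_le)
    | Nat.succ i =>
      have hsum : D (i+1) ≤ 2 * (ENNReal.ofReal |f (y (m1+i+1)) - f (y (m1+i))| ⊔
          ENNReal.ofReal |f (x (m1+i)) - f (x (m1+i+1))|) := by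
        rw [two_mul]
        exact add_le_add le_sup_left le_sup_right
      calc D (i+1) ^ p ≤ (2 * (ENNReal.ofReal |f (y (m1+i+1)) - f (y (m1+i))| ⊔
            ENNReal.ofReal |f (x (m1+i)) - f (x (m1+i+1))|)) ^ p :=
            ENNReal.rpow_le_rpow hsum hp0.le
        _ = (2:ℝ≥0∞)^p * (ENNReal.ofReal |f (y (m1+i+1)) - f (y (m1+i))| ⊔
            ENNReal.ofReal |f (x (m1+i)) - f (x (m1+i+1))|) ^ p :=
            ENNReal.mul_rpow_of_nonneg _ _ hp0.le
        _ ≤ (2:ℝ≥0∞)^p * Sres (s+(i+1)) := by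
            refine mul_le_mul_right ?_ _
            rcases le_total (ENNReal.ofReal |f (y (m1+i+1)) - f (y (m1+i))|)
              (ENNReal.ofReal |f (x (m1+i)) - f (x (m1+i+1))|) with hle | hle
            · rw [sup_eq_right.2 hle]; exact hxstep i
            · rw [sup_eq_left.2 hle]; exact hystep i
  -- weights
  have hα0 : 0 < α := lt_trans (by
    have : 0 < 1 - 1/p := by
      have : 1/p < 1 := by rw [div_lt_one hp0]; exact hp
      linarith
    exact this) hα
  have hαp0 : 0 ≤ α * p := le_of_lt (mul_pos hα0 hp0)
  have hT : (∑' n, (W n * D n) ^ p) ≤ (2:ℝ≥0∞)^p * Omega f nh α p a b := by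
    have hterm : ∀ n : ℕ, (W n * D n) ^ p ≤
        (2:ℝ≥0∞)^p * (ENNReal.ofReal ((((s+n:ℕ):ℝ)+1)^(α*p)) * Sres (s+n)) := by
      intro n
      have hWp : W n ^ p = ENNReal.ofReal (((n:ℝ)+1)^(α*p)) := by
        rw [hW, ENNReal.ofReal_rpow_of_nonneg (Real.rpow_nonneg (hn1pos n).le _) hp0.le,
          ← Real.rpow_mul (hn1pos n).le]
      have hwle : ENNReal.ofReal (((n:ℝ)+1)^(α*p)) ≤
          ENNReal.ofReal ((((s+n:ℕ):ℝ)+1)^(α*p)) := by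
        refine ENNReal.ofReal_le_ofReal (Real.rpow_le_rpow (hn1pos n).le ?_ hαp0)
        push_cast
        linarith [Nat.cast_nonneg (α := ℝ) s]
      calc (W n * D n) ^ p = W n ^ p * D n ^ p := ENNReal.mul_rpow_of_nonneg _ _ hp0.le
        _ ≤ ENNReal.ofReal ((((s+n:ℕ):ℝ)+1)^(α*p)) * ((2:ℝ≥0∞)^p * Sres (s+n)) := by
            rw [hWp]; exact mul_le_mul' hwle (hDn n)
        _ = (2:ℝ≥0∞)^p * (ENNReal.ofReal ((((s+n:ℕ):ℝ)+1)^(α*p)) * Sres (s+n)) := by ring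
    calc (∑' n, (W n * D n) ^ p)
        ≤ ∑' n, (2:ℝ≥0∞)^p * (ENNReal.ofReal ((((s+n:ℕ):ℝ)+1)^(α*p)) * Sres (s+n)) :=
          ENNReal.tsum_le_tsum hterm
      _ = (2:ℝ≥0∞)^p * ∑' n, (ENNReal.ofReal ((((s+n:ℕ):ℝ)+1)^(α*p)) * Sres (s+n)) :=
          ENNReal.tsum_mul_left
      _ ≤ (2:ℝ≥0∞)^p * Omega f nh α p a b := by
          refine mul_le_mul_right ?_ _
          have hinj : Function.Injective (fun n : ℕ => s + n) := fun u v huv => Nat.add_left_cancel huv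
          calc ∑' n, (ENNReal.ofReal ((((s+n:ℕ):ℝ)+1)^(α*p)) * Sres (s+n))
              ≤ ∑' q, (ENNReal.ofReal ((((q:ℕ):ℝ)+1)^(α*p)) * Sres q) :=
                ENNReal.tsum_comp_le_tsum_of_injective hinj
                  (fun q => ENNReal.ofReal ((((q:ℕ):ℝ)+1)^(α*p)) * Sres q)
            _ = Omega f nh α p a b := by rw [hSres]; rfl
  -- final assembly
  calc ENNReal.ofReal (|f b - f a| ^ p)
      = (ENNReal.ofReal |f b - f a|) ^ p :=
        (ENNReal.ofReal_rpow_of_nonneg (abs_nonneg _) hp0.le).symm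
    _ ≤ (ENNReal.ofReal (cConst α p) * (∑' n, (W n * D n) ^ p) ^ (1/p)) ^ p :=
        ENNReal.rpow_le_rpow (le_trans hstep1 hstep2) hp0.le
    _ = ENNReal.ofReal (cConst α p) ^ p * ((∑' n, (W n * D n) ^ p) ^ (1/p)) ^ p :=
        ENNReal.mul_rpow_of_nonneg _ _ hp0.le
    _ = ENNReal.ofReal (cConst α p) ^ p * (∑' n, (W n * D n) ^ p) := by
        rw [← ENNReal.rpow_mul, one_div, inv_mul_cancel₀ (ne_of_gt hp0), ENNReal.rpow_one]
    _ ≤ ENNReal.ofReal (cConst α p) ^ p * ((2:ℝ≥0∞)^p * Omega f nh α p a b) :=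
        mul_le_mul_right hT _
    _ = ENNReal.ofReal (cConst α p) ^ p * (2:ℝ≥0∞)^p * Omega f nh α p a b := by
        rw [mul_assoc]

lemma sum_Omega_chain (f : ℝ → ℝ) (nh : ℕ) (α p : ℝ) (v : ℕ → ℝ) (hv : Monotone v) (n : ℕ) :
    ∑ i ∈ Finset.range n, Omega f nh α p (v i) (v (i+1)) ≤ Omega f nh α p (v 0) (v n) := by
  induction n with
  | zero => simp
  | succ n ih =>
    rw [Finset.sum_range_succ]
    exact le_trans (add_le_add_left ih _)
      (Omega_superadd f nh α p (hv (Nat.zero_le n)) (hv (Nat.le_succ n)))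


set_option maxHeartbeats 2000000 in
/-- `p`-variation bound for the frame increments: for `p > 1`, `α > 1 - 1/p`, `f ∈ C([-1,1])`
and `h ∈ (0,1]`, with `nh = n(h)` the unique integer with `2^{-nh} ≤ h < 2^{-nh+1}`,
`V_p(T_h^f - T_0^f) ≤ 4 c(α,p) S_p(f,h,α)^{1/p}` in `[0,∞]`. -/
theorem frame_pvar_bound (p α : ℝ) (hp : 1 < p) (hα : 1 - 1/p < α)
    (f : ℝ → ℝ) (hf : ContinuousOn f (Set.Icc (-1) 1))
    (h : ℝ) (h0 : 0 < h) (h1 : h ≤ 1)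
    (nh : ℕ) (hn1 : (2:ℝ) ^ (-(nh:ℤ)) ≤ h) (hn2 : h < (2:ℝ) ^ (-(nh:ℤ) + 1)) :
    pVar p (fun u => f (h - 1 + u) - f (-1 + u)) ≤
      ENNReal.ofReal (4 * cConst α p) * (Sp f nh α p) ^ (1/p) := by
  have hp0 : 0 < p := lt_trans one_pos hp
  have hba : h < 2 * ((2:ℝ) ^ nh)⁻¹ := by
    have he : (2:ℝ)^(-(nh:ℤ)+1) = 2 * ((2:ℝ)^nh)⁻¹ := by
      rw [zpow_add₀ (two_ne_zero), zpow_one, zpow_neg, zpow_natCast]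
      ring
    rw [he] at hn2; exact hn2
  set K : ℝ≥0∞ := ENNReal.ofReal (cConst α p) with hK
  unfold pVar
  refine iSup_le fun n => iSup_le fun t => iSup_le fun hts => iSup_le fun ht0 =>
    iSup_le fun ht1 => ?_
  have hmem : ∀ i : Fin n, 0 ≤ t i.castSucc ∧ t i.castSucc ≤ t i.succ ∧ t i.succ ≤ 1 := by
    intro i
    refine ⟨?_, ?_, ?_⟩
    · rw [← ht0]; exact hts.monotone (Fin.zero_le _)
    · exact hts.monotone (le_of_lt (Fin.castSucc_lt_succ (i := i)))
    · rw [← ht1]; exact hts.monotone (Fin.le_last _)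
  have hterm : ∀ i : Fin n,
      (ENNReal.ofReal ‖(f (h - 1 + t i.succ) - f (-1 + t i.succ)) -
        (f (h - 1 + t i.castSucc) - f (-1 + t i.castSucc))‖) ^ p ≤
      (2:ℝ≥0∞)^(p-1) * (K ^ p * (2:ℝ≥0∞) ^ p *
        (Omega f nh α p (-1 + t i.castSucc) (-1 + t i.succ) +
         Omega f nh α p (h - 1 + t i.castSucc) (h - 1 + t i.succ))) := by
    intro i
    obtain ⟨h0s, hst, ht1'⟩ := hmem i
    set s' := t i.castSucc with hs'
    set t' := t i.succ with ht'
    by_cases hcase : t' - s' ≤ h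
    · have tri : ‖(f (h - 1 + t') - f (-1 + t')) - (f (h - 1 + s') - f (-1 + s'))‖ ≤
          |f (h - 1 + t') - f (h - 1 + s')| + |f (-1 + t') - f (-1 + s')| := by
        rw [Real.norm_eq_abs]
        calc |(f (h - 1 + t') - f (-1 + t')) - (f (h - 1 + s') - f (-1 + s'))|
            = |(f (h - 1 + t') - f (h - 1 + s')) - (f (-1 + t') - f (-1 + s'))| := by
              congr 1; ring
          _ ≤ _ := abs_sub _ _
      have hA : ENNReal.ofReal (|f (h - 1 + t') - f (h - 1 + s')| ^ p) ≤
          K ^ p * (2:ℝ≥0∞) ^ p * Omega f nh α p (h - 1 + s') (h - 1 + t') :=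
        chain_bound p α hp hα f hf nh (by linarith) (by linarith) (by linarith) (by linarith)
      have hB : ENNReal.ofReal (|f (-1 + t') - f (-1 + s')| ^ p) ≤
          K ^ p * (2:ℝ≥0∞) ^ p * Omega f nh α p (-1 + s') (-1 + t') :=
        chain_bound p α hp hα f hf nh (by linarith) (by linarith) (by linarith) (by linarith)
      calc (ENNReal.ofReal ‖(f (h - 1 + t') - f (-1 + t')) -
              (f (h - 1 + s') - f (-1 + s'))‖) ^ p
          ≤ (ENNReal.ofReal (|f (h - 1 + t') - f (h - 1 + s')| +
              |f (-1 + t') - f (-1 + s')|)) ^ p :=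
            ENNReal.rpow_le_rpow (ENNReal.ofReal_le_ofReal tri) hp0.le
        _ = (ENNReal.ofReal |f (h - 1 + t') - f (h - 1 + s')| +
              ENNReal.ofReal |f (-1 + t') - f (-1 + s')|) ^ p := by
            rw [ENNReal.ofReal_add (abs_nonneg _) (abs_nonneg _)]
        _ ≤ (2:ℝ≥0∞)^(p-1) * ((ENNReal.ofReal |f (h - 1 + t') - f (h - 1 + s')|) ^ p +
              (ENNReal.ofReal |f (-1 + t') - f (-1 + s')|) ^ p) :=
            ENNReal.rpow_add_le_mul_rpow_add_rpow _ _ hp.le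
        _ ≤ _ := by
            refine mul_le_mul_right ?_ _
            rw [ENNReal.ofReal_rpow_of_nonneg (abs_nonneg _) hp0.le,
              ENNReal.ofReal_rpow_of_nonneg (abs_nonneg _) hp0.le]
            calc ENNReal.ofReal (|f (h - 1 + t') - f (h - 1 + s')| ^ p) +
                  ENNReal.ofReal (|f (-1 + t') - f (-1 + s')| ^ p)
                ≤ K ^ p * (2:ℝ≥0∞) ^ p * Omega f nh α p (h - 1 + s') (h - 1 + t') +
                  K ^ p * (2:ℝ≥0∞) ^ p * Omega f nh α p (-1 + s') (-1 + t') :=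
                  add_le_add hA hB
              _ = _ := by ring
    · push_neg at hcase
      have tri : ‖(f (h - 1 + t') - f (-1 + t')) - (f (h - 1 + s') - f (-1 + s'))‖ ≤
          |f (h - 1 + t') - f (-1 + t')| + |f (h - 1 + s') - f (-1 + s')| := by
        rw [Real.norm_eq_abs]
        exact abs_sub _ _
      have hA : ENNReal.ofReal (|f (h - 1 + t') - f (-1 + t')| ^ p) ≤
          K ^ p * (2:ℝ≥0∞) ^ p * Omega f nh α p (-1 + t') (h - 1 + t') :=
        chain_bound p α hp hα f hf nh (by linarith) (by linarith) (by linarith) (by linarith)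
      have hB : ENNReal.ofReal (|f (h - 1 + s') - f (-1 + s')| ^ p) ≤
          K ^ p * (2:ℝ≥0∞) ^ p * Omega f nh α p (-1 + s') (h - 1 + s') :=
        chain_bound p α hp hα f hf nh (by linarith) (by linarith) (by linarith) (by linarith)
      have hA2 : Omega f nh α p (-1 + t') (h - 1 + t') ≤
          Omega f nh α p (h - 1 + s') (h - 1 + t') :=
        Omega_mono f nh α p (by linarith) le_rfl
      have hB2 : Omega f nh α p (-1 + s') (h - 1 + s') ≤
          Omega f nh α p (-1 + s') (-1 + t') :=
        Omega_mono f nh α p le_rfl (by linarith)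
      calc (ENNReal.ofReal ‖(f (h - 1 + t') - f (-1 + t')) -
              (f (h - 1 + s') - f (-1 + s'))‖) ^ p
          ≤ (ENNReal.ofReal (|f (h - 1 + t') - f (-1 + t')| +
              |f (h - 1 + s') - f (-1 + s')|)) ^ p :=
            ENNReal.rpow_le_rpow (ENNReal.ofReal_le_ofReal tri) hp0.le
        _ = (ENNReal.ofReal |f (h - 1 + t') - f (-1 + t')| +
              ENNReal.ofReal |f (h - 1 + s') - f (-1 + s')|) ^ p := by
            rw [ENNReal.ofReal_add (abs_nonneg _) (abs_nonneg _)]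
        _ ≤ (2:ℝ≥0∞)^(p-1) * ((ENNReal.ofReal |f (h - 1 + t') - f (-1 + t')|) ^ p +
              (ENNReal.ofReal |f (h - 1 + s') - f (-1 + s')|) ^ p) :=
            ENNReal.rpow_add_le_mul_rpow_add_rpow _ _ hp.le
        _ ≤ _ := by
            refine mul_le_mul_right ?_ _
            rw [ENNReal.ofReal_rpow_of_nonneg (abs_nonneg _) hp0.le,
              ENNReal.ofReal_rpow_of_nonneg (abs_nonneg _) hp0.le]
            calc ENNReal.ofReal (|f (h - 1 + t') - f (-1 + t')| ^ p) +
                  ENNReal.ofReal (|f (h - 1 + s') - f (-1 + s')| ^ p)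
                ≤ K ^ p * (2:ℝ≥0∞) ^ p * Omega f nh α p (h - 1 + s') (h - 1 + t') +
                  K ^ p * (2:ℝ≥0∞) ^ p * Omega f nh α p (-1 + s') (-1 + t') :=
                  add_le_add (le_trans hA (mul_le_mul_right hA2 _))
                    (le_trans hB (mul_le_mul_right hB2 _))
              _ = _ := by ring
  -- sum the Omegas over the dissection
  have hσ : ∀ σ : ℝ, ∑ i : Fin n, Omega f nh α p (σ + t i.castSucc) (σ + t i.succ) ≤
      Omega f nh α p σ (σ + 1) := by
    intro σ
    set v : ℕ → ℝ := fun j => σ + t ⟨min j n, by omega⟩ with hv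
    have hvmono : Monotone v := by
      intro u u' huu'
      simp only [hv]
      have hle : (⟨min u n, by omega⟩ : Fin (n+1)) ≤ ⟨min u' n, by omega⟩ := by
        simp only [Fin.le_def]
        exact min_le_min huu' le_rfl
      exact add_le_add_right (hts.monotone hle) σ
    have hveq : ∀ i : Fin n, Omega f nh α p (σ + t i.castSucc) (σ + t i.succ) =
        Omega f nh α p (v i) (v (i+1)) := by
      intro i
      have e1 : v i = σ + t i.castSucc := by
        simp only [hv]
        congr 2
        exact Fin.ext (by simp [Nat.min_eq_left (le_of_lt i.isLt)])
      have e2 : v (i+1 : ℕ) = σ + t i.succ := by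
        simp only [hv]
        congr 2
        exact Fin.ext (by simp [Nat.min_eq_left i.isLt])
      rw [e1, e2]
    rw [Finset.sum_congr rfl (fun i _ => hveq i),
      Fin.sum_univ_eq_sum_range (fun j => Omega f nh α p (v j) (v (j+1))) n]
    have hchain := sum_Omega_chain f nh α p v hvmono n
    have hv0 : v 0 = σ := by
      have : (⟨min 0 n, by omega⟩ : Fin (n+1)) = 0 := Fin.ext (by simp)
      simp only [hv, this, ht0, add_zero]
    have hvn : v n = σ + 1 := by
      have : (⟨min n n, by omega⟩ : Fin (n+1)) = Fin.last n := Fin.ext (by simp)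
      simp only [hv, this, ht1]
    rw [hv0, hvn] at hchain
    exact hchain
  have key : ∑ i : Fin n, (ENNReal.ofReal ‖(f (h - 1 + t i.succ) - f (-1 + t i.succ)) -
        (f (h - 1 + t i.castSucc) - f (-1 + t i.castSucc))‖) ^ p ≤
      (ENNReal.ofReal (4 * cConst α p)) ^ p * Sp f nh α p := by
    calc ∑ i : Fin n, (ENNReal.ofReal ‖(f (h - 1 + t i.succ) - f (-1 + t i.succ)) -
            (f (h - 1 + t i.castSucc) - f (-1 + t i.castSucc))‖) ^ p
        ≤ ∑ i : Fin n, (2:ℝ≥0∞)^(p-1) * (K ^ p * (2:ℝ≥0∞) ^ p *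
            (Omega f nh α p (-1 + t i.castSucc) (-1 + t i.succ) +
             Omega f nh α p (h - 1 + t i.castSucc) (h - 1 + t i.succ))) :=
          Finset.sum_le_sum (fun i _ => hterm i)
      _ = (2:ℝ≥0∞)^(p-1) * (K ^ p * (2:ℝ≥0∞) ^ p *
            ((∑ i : Fin n, Omega f nh α p (-1 + t i.castSucc) (-1 + t i.succ)) +
             (∑ i : Fin n, Omega f nh α p (h - 1 + t i.castSucc) (h - 1 + t i.succ)))) := by
          rw [← Finset.mul_sum, ← Finset.sum_add_distrib, ← Finset.mul_sum]
      _ ≤ (2:ℝ≥0∞)^(p-1) * (K ^ p * (2:ℝ≥0∞) ^ p *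
            (Omega f nh α p (-1) (-1 + 1) + Omega f nh α p (h-1) (h-1+1))) := by
          refine mul_le_mul_right (mul_le_mul_right (add_le_add (hσ (-1)) (hσ (h-1))) _) _
      _ ≤ (2:ℝ≥0∞)^(p-1) * (K ^ p * (2:ℝ≥0∞) ^ p * (Sp f nh α p + Sp f nh α p)) := by
          refine mul_le_mul_right (mul_le_mul_right (add_le_add ?_ ?_) _) _
          · exact Omega_le_Sp f nh α p _ _
          · exact Omega_le_Sp f nh α p _ _
      _ = (2:ℝ≥0∞)^(p-1) * (2:ℝ≥0∞)^p * ((2:ℝ≥0∞) * (K ^ p * Sp f nh α p)) := by ring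
      _ = (ENNReal.ofReal (4 * cConst α p)) ^ p * Sp f nh α p := by
          rw [ENNReal.ofReal_mul (by norm_num : (0:ℝ) ≤ 4),
            ENNReal.mul_rpow_of_nonneg _ _ hp0.le, ← hK]
          have h4 : (ENNReal.ofReal 4) = (2:ℝ≥0∞) ^ (2:ℝ) := by
            rw [show ((2:ℝ)) = ((2:ℕ):ℝ) by norm_num, ENNReal.rpow_natCast]
            rw [show ENNReal.ofReal 4 = (4:ℝ≥0∞) by
              rw [show (4:ℝ) = ((4:ℕ):ℝ) by norm_num, ENNReal.ofReal_natCast]; norm_num]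
            norm_num
          rw [h4, ← ENNReal.rpow_mul]
          have h2 : (2:ℝ≥0∞) = (2:ℝ≥0∞) ^ (1:ℝ) := (ENNReal.rpow_one _).symm
          calc (2:ℝ≥0∞)^(p-1) * (2:ℝ≥0∞)^p * ((2:ℝ≥0∞) * (K ^ p * Sp f nh α p))
              = ((2:ℝ≥0∞)^(p-1) * (2:ℝ≥0∞)^p * (2:ℝ≥0∞)^(1:ℝ)) * (K ^ p * Sp f nh α p) := by
                rw [← h2]; ring
            _ = (2:ℝ≥0∞)^(2*p) * (K ^ p * Sp f nh α p) := by
                rw [← ENNReal.rpow_add _ _ (by norm_num) (by norm_num),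
                  ← ENNReal.rpow_add _ _ (by norm_num) (by norm_num)]
                ring_nf
            _ = (2:ℝ≥0∞)^(2*p) * K ^ p * Sp f nh α p := by rw [mul_assoc]
  calc (∑ i : Fin n, (ENNReal.ofReal ‖(f (h - 1 + t i.succ) - f (-1 + t i.succ)) -
          (f (h - 1 + t i.castSucc) - f (-1 + t i.castSucc))‖) ^ p) ^ p⁻¹
      ≤ ((ENNReal.ofReal (4 * cConst α p)) ^ p * Sp f nh α p) ^ p⁻¹ :=
        ENNReal.rpow_le_rpow key (inv_nonneg.2 hp0.le)
    _ = ENNReal.ofReal (4 * cConst α p) * (Sp f nh α p) ^ (1/p) := by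
        rw [ENNReal.mul_rpow_of_nonneg _ _ (inv_nonneg.2 hp0.le), ← ENNReal.rpow_mul,
          mul_inv_cancel₀ (ne_of_gt hp0), ENNReal.rpow_one, one_div]
end

section
/- Let p > 1, α > 1 − 1/p, f ∈ C([−1,1],ℝ) and 0 ≤ h_1 < h_2 ≤ 1. Then sup_{u∈[0,1]} |T_{h_2}^f(u) − T_{h_1}^f(u)| + V_p(T_{h_2}^f − T_{h_1}^f) ≤ (4 + 2^{(p−1)/p}) c(α,p) · S_p(f, h_2 − h_1, α)^{1/p} (as an inequality in [0,∞]). -/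
open MeasureTheory ProbabilityTheory Filter
open scoped ENNReal NNReal

open Topology

namespace FrameAux

noncomputable section

/-- dyadic grid point `k/2^L - 1` of `[-1,1]` -/
def grid (L k : ℕ) : ℝ := (k : ℝ) / 2 ^ L - 1

lemma grid_lt (L k : ℕ) : grid L k < grid L (k + 1) := by
  have h : (0:ℝ) < 2 ^ L := by positivity
  have : grid L (k+1) - grid L k = 1 / 2^L := by
    unfold grid; push_cast; ring
  have h2 : (0:ℝ) < 1 / 2^L := by positivity
  linarith

def inc (f : ℝ → ℝ) (p : ℝ) (L k : ℕ) : ℝ≥0∞ :=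
  ENNReal.ofReal (|f (grid L (k + 1)) - f (grid L k)| ^ p)

/-- sum of `p`-th powers of increments of `f` over dyadic level-`L` intervals inside `[u,v]` -/
def sig (f : ℝ → ℝ) (p : ℝ) (L : ℕ) (u v : ℝ) : ℝ≥0∞ :=
  ∑ k ∈ Finset.range (2 ^ (L + 1)),
    if u ≤ grid L k ∧ grid L (k + 1) ≤ v then inc f p L k else 0

/-- weighted sum of localized dyadic variations -/
def Wfun (f : ℝ → ℝ) (p α : ℝ) (nh : ℕ) (u v : ℝ) : ℝ≥0∞ :=
  ∑' n : ℕ, ENNReal.ofReal (((n : ℝ) + 1) ^ (α * p)) * sig f p (n + nh) u v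

variable {f : ℝ → ℝ} {p α : ℝ} {nh : ℕ}

lemma inc_le_sig {L k : ℕ} {u v : ℝ} (h1 : u ≤ grid L k) (h2 : grid L (k + 1) ≤ v)
    (hk : k < 2 ^ (L + 1)) : inc f p L k ≤ sig f p L u v := by
  calc inc f p L k
      = (if u ≤ grid L k ∧ grid L (k+1) ≤ v then inc f p L k else 0) := by
        rw [if_pos ⟨h1, h2⟩]
    _ ≤ sig f p L u v :=
        Finset.single_le_sum (f := fun k => if u ≤ grid L k ∧ grid L (k+1) ≤ v then inc f p L k else 0)
          (fun i _ => zero_le) (Finset.mem_range.mpr hk)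

lemma pair_le_sig {L k k' : ℕ} {u v : ℝ} (hne : k ≠ k')
    (h1 : u ≤ grid L k) (h2 : grid L (k + 1) ≤ v) (hk : k < 2 ^ (L + 1))
    (h1' : u ≤ grid L k') (h2' : grid L (k' + 1) ≤ v) (hk' : k' < 2 ^ (L + 1)) :
    inc f p L k + inc f p L k' ≤ sig f p L u v := by
  have hsub : ({k, k'} : Finset ℕ) ⊆ Finset.range (2 ^ (L + 1)) := by
    intro x hx
    rcases Finset.mem_insert.mp hx with h | h
    · exact h ▸ Finset.mem_range.mpr hk
    · rw [Finset.mem_singleton.mp h]; exact Finset.mem_range.mpr hk'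
  calc inc f p L k + inc f p L k'
      = ∑ x ∈ ({k, k'} : Finset ℕ),
          (if u ≤ grid L x ∧ grid L (x+1) ≤ v then inc f p L x else 0) := by
        rw [Finset.sum_pair hne, if_pos ⟨h1, h2⟩, if_pos ⟨h1', h2'⟩]
    _ ≤ sig f p L u v := Finset.sum_le_sum_of_subset hsub

lemma sum_ite_le {ι : Type*} (s : Finset ι) (P : ι → Prop) [DecidablePred P] (c : ι → ℝ≥0∞)
    (hc : ∀ i, c i ≤ C) (h : ∀ i ∈ s, ∀ j ∈ s, P i → P j → i = j) :
    (∑ i ∈ s, if P i then c i else 0) ≤ C := by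
  classical
  rw [← Finset.sum_filter]
  rcases Finset.eq_empty_or_nonempty (s.filter P) with he | ⟨i, hi⟩
  · rw [he, Finset.sum_empty]; exact zero_le
  · have hsingle : s.filter P = {i} := by
      apply Finset.eq_singleton_iff_unique_mem.mpr
      refine ⟨hi, fun x hx => ?_⟩
      rcases Finset.mem_filter.mp hx with ⟨hxs, hxP⟩
      rcases Finset.mem_filter.mp hi with ⟨his, hiP⟩
      exact h x hxs i his hxP hiP
    rw [hsingle, Finset.sum_singleton]
    exact hc i

/-- key disjointness: for an increasing family of intervals, localized variations add up
to at most the total level sum -/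
lemma sum_sig_le {m : ℕ} (a b : Fin m → ℝ) (hord : ∀ i j, i < j → b i ≤ a j) (L : ℕ) :
    ∑ i, sig f p L (a i) (b i) ≤ ∑ k ∈ Finset.range (2 ^ (L + 1)), inc f p L k := by
  unfold sig
  rw [Finset.sum_comm]
  apply Finset.sum_le_sum
  intro k _
  apply sum_ite_le _ _ _ (fun i => le_rfl)
  intro i _ j _ hi hj
  by_contra hne
  have hg := grid_lt L k
  rcases lt_or_gt_of_ne hne with h | h
  · have := hord i j h; linarith [hi.2, hj.1]
  · have := hord j i h; linarith [hj.2, hi.1]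

lemma sum_inc_eq (L : ℕ) :
    ∑ k ∈ Finset.range (2 ^ (L + 1)), inc f p L k =
    ∑ k ∈ Finset.range (2 ^ (L + 1)),
      ENNReal.ofReal (|f (((k : ℝ) + 1) / 2 ^ L - 1) - f ((k : ℝ) / 2 ^ L - 1)| ^ p) := by
  refine Finset.sum_congr rfl fun k _ => ?_
  unfold inc grid
  push_cast
  rfl

lemma sum_W_le {m : ℕ} (a b : Fin m → ℝ) (hord : ∀ i j, i < j → b i ≤ a j) :
    ∑ i, Wfun f p α nh (a i) (b i) ≤ Sp f nh α p := by
  unfold Wfun Sp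
  rw [← Summable.tsum_finsetSum (fun i _ => ENNReal.summable)]
  apply ENNReal.tsum_le_tsum
  intro n
  rw [← Finset.mul_sum]
  apply mul_le_mul_right
  rw [← sum_inc_eq]
  exact sum_sig_le a b hord _

lemma W_le_Sp {u v : ℝ} : Wfun f p α nh u v ≤ Sp f nh α p := by
  have h := sum_W_le (f := f) (p := p) (α := α) (nh := nh) (m := 1)
    (fun _ => u) (fun _ => v) (fun i j hij => absurd hij (by omega))
  simpa using h


def clv (u : ℝ) (L : ℕ) : ℤ := ⌈(u + 1) * 2 ^ L⌉
def flv (v : ℝ) (L : ℕ) : ℤ := ⌊(v + 1) * 2 ^ L⌋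
def pc (u : ℝ) (L : ℕ) : ℝ := (clv u L : ℝ) / 2 ^ L - 1
def pf (v : ℝ) (L : ℕ) : ℝ := (flv v L : ℝ) / 2 ^ L - 1

lemma pc_ge (u : ℝ) (L : ℕ) : u ≤ pc u L := by
  have h := Int.le_ceil ((u + 1) * 2 ^ L)
  have hpos : (0:ℝ) < 2 ^ L := by positivity
  unfold pc clv
  rw [le_sub_iff_add_le, le_div_iff₀ hpos]
  linarith
lemma pc_le (u : ℝ) (L : ℕ) : pc u L ≤ u + ((2:ℝ) ^ L)⁻¹ := by
  have h := (Int.ceil_lt_add_one ((u + 1) * 2 ^ L)).le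
  have hpos : (0:ℝ) < 2 ^ L := by positivity
  unfold pc clv
  rw [sub_le_iff_le_add, div_le_iff₀ hpos]
  have hee : (u + ((2:ℝ)^L)⁻¹ + 1) * 2 ^ L = (u+1) * 2^L + 1 := by field_simp; ring
  rw [hee]; exact h
lemma pf_le (v : ℝ) (L : ℕ) : pf v L ≤ v := by
  have h := Int.floor_le ((v + 1) * 2 ^ L)
  have hpos : (0:ℝ) < 2 ^ L := by positivity
  unfold pf flv
  rw [sub_le_iff_le_add, div_le_iff₀ hpos]
  linarith
lemma pf_ge (v : ℝ) (L : ℕ) : v - ((2:ℝ) ^ L)⁻¹ ≤ pf v L := by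
  have h := (Int.lt_floor_add_one ((v + 1) * 2 ^ L)).le
  have hpos : (0:ℝ) < 2 ^ L := by positivity
  unfold pf flv
  rw [le_sub_iff_add_le, le_div_iff₀ hpos]
  have hee : (v - ((2:ℝ)^L)⁻¹ + 1) * 2 ^ L = (v+1) * 2^L - 1 := by field_simp; ring
  rw [hee]; linarith

lemma clv_step (u : ℝ) (L : ℕ) :
    2 * clv u L - 1 ≤ clv u (L + 1) ∧ clv u (L + 1) ≤ 2 * clv u L := by
  have hh : (u + 1) * 2 ^ (L+1) = 2 * ((u+1) * 2 ^ L) := by ring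
  constructor
  · have h2 : (((2 * clv u L - 2 : ℤ)) : ℝ) < (u + 1) * 2 ^ (L+1) := by
      push_cast
      rw [hh]
      have := Int.ceil_lt_add_one ((u + 1) * 2 ^ L)
      unfold clv
      push_cast at *
      linarith
    have := Int.lt_ceil.mpr h2
    unfold clv at *
    omega
  · apply Int.ceil_le.mpr
    rw [hh]
    push_cast
    have := Int.le_ceil ((u + 1) * 2 ^ L)
    unfold clv
    linarith

lemma flv_step (v : ℝ) (L : ℕ) :
    2 * flv v L ≤ flv v (L + 1) ∧ flv v (L + 1) ≤ 2 * flv v L + 1 := by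
  have hh : (v + 1) * 2 ^ (L+1) = 2 * ((v+1) * 2 ^ L) := by ring
  constructor
  · apply Int.le_floor.mpr
    rw [hh]
    push_cast
    have := Int.floor_le ((v + 1) * 2 ^ L)
    unfold flv
    linarith
  · have h2 : (v + 1) * 2 ^ (L+1) < ((2 * flv v L + 2 : ℤ) : ℝ) := by
      push_cast
      rw [hh]
      have := Int.lt_floor_add_one ((v + 1) * 2 ^ L)
      unfold flv
      push_cast at *
      linarith
    have := Int.floor_lt.mpr h2
    unfold flv at *
    omega

lemma clv_nonneg {u : ℝ} (hu : -1 ≤ u) (L : ℕ) : 0 ≤ clv u L :=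
  Int.ceil_nonneg (by nlinarith [pow_pos (show (0:ℝ) < 2 by norm_num) L])

lemma flv_le_pow {v : ℝ} (hv : v ≤ 1) (L : ℕ) : flv v L ≤ 2 ^ (L + 1) := by
  have h : (v + 1) * 2 ^ L ≤ ((2 ^ (L+1) : ℤ) : ℝ) := by
    push_cast
    have hpos : (0:ℝ) < 2 ^ L := by positivity
    have : (2:ℝ) ^ (L+1) = 2 * 2 ^ L := by ring
    nlinarith
  have h2 := Int.floor_le_floor h
  rwa [Int.floor_intCast] at h2


lemma ofReal_abs_rpow {p : ℝ} (hp : 0 ≤ p) (x : ℝ) :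
    (ENNReal.ofReal |x|) ^ p = ENNReal.ofReal (|x| ^ p) :=
  ENNReal.ofReal_rpow_of_nonneg (abs_nonneg _) hp

theorem chain_pow {f : ℝ → ℝ} {p α : ℝ} {nh : ℕ} (hp : 1 < p) (hα : 1 - 1/p < α)
    (hf : ContinuousOn f (Set.Icc (-1) 1))
    {u v : ℝ} (hu : -1 ≤ u) (huv : u < v) (hv : v ≤ 1)
    (hlen : v - u < 2 * ((2:ℝ) ^ nh)⁻¹) :
    (ENNReal.ofReal |f v - f u|) ^ p ≤
      ENNReal.ofReal (2 ^ (p - 1) * (cConst α p) ^ p) * Wfun f p α nh u v := by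
  classical
  have hp0 : (0:ℝ) < p := lt_trans one_pos hp
  have hp1 : (0:ℝ) ≤ p - 1 := by linarith
  have hα0 : 0 < α := by
    have h1 : 1 / p < 1 := by rw [div_lt_one hp0]; exact hp
    linarith
  have hαp : (0:ℝ) ≤ α * p := by positivity
  -- minimal level where the ceil of u is at most the floor of v
  have hvu : (0:ℝ) < v - u := sub_pos.mpr huv
  obtain ⟨M, hM⟩ := pow_unbounded_of_one_lt ((v - u)⁻¹) (one_lt_two (α := ℝ))
  have hex : ∃ L, clv u L ≤ flv v L := by
    refine ⟨M, ?_⟩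
    have h1 : 1 ≤ (v - u) * 2 ^ M := by
      have h2 := mul_lt_mul_of_pos_left hM hvu
      rw [mul_inv_cancel₀ hvu.ne'] at h2
      exact h2.le
    apply Int.ceil_le.mpr
    have h3 : (u + 1) * 2 ^ M ≤ (v + 1) * 2 ^ M - 1 := by nlinarith
    have h4 := Int.lt_floor_add_one ((v + 1) * 2 ^ M)
    unfold flv
    linarith
  set L₀ := Nat.find hex with hL₀def
  have hL₀ : clv u L₀ ≤ flv v L₀ := Nat.find_spec hex
  have hmono : ∀ L, L₀ ≤ L → clv u L ≤ flv v L := by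
    intro L hL
    induction L, hL using Nat.le_induction with
    | base => exact hL₀
    | succ L hL ih =>
      have h1 := (clv_step u L).2
      have h2 := (flv_step v L).1
      omega
  set L₁ := max nh L₀ with hL₁def
  have hnhL₁ : nh ≤ L₁ := le_max_left _ _
  have hUV : ∀ j : ℕ, clv u (L₁ + j) ≤ flv v (L₁ + j) := fun j =>
    hmono _ (le_trans (le_max_right _ _) (Nat.le_add_right _ _))
  -- at most one base interval
  have hbase : flv v L₁ ≤ clv u L₁ + 1 := by
    rcases le_or_gt L₀ nh with hc | hc
    · have hL₁nh : L₁ = nh := max_eq_left hc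
      have hfl : (flv v L₁ : ℝ) ≤ (v+1) * 2^L₁ := Int.floor_le _
      have hcl : (u+1) * 2^L₁ ≤ (clv u L₁ : ℝ) := Int.le_ceil _
      have hpos : (0:ℝ) < 2^L₁ := by positivity
      have h2 : (v - u) * 2^L₁ < 2 := by
        rw [hL₁nh]
        have hpos' : (0:ℝ) < 2^nh := by positivity
        have h3 := mul_lt_mul_of_pos_right hlen hpos'
        calc (v - u) * 2 ^ nh < 2 * ((2:ℝ)^nh)⁻¹ * 2 ^ nh := h3
          _ = 2 := by field_simp
      have h1 : ((flv v L₁ : ℝ)) - ((clv u L₁ : ℝ)) < 2 := by nlinarith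
      have h5 : (flv v L₁) - (clv u L₁) < 2 := by exact_mod_cast h1
      omega
    · have hL₁eq : L₁ = L₀ := max_eq_right hc.le
      obtain ⟨N, hN⟩ : ∃ N, L₀ = N + 1 := ⟨L₀ - 1, by omega⟩
      have hnP : ¬ (clv u N ≤ flv v N) := by
        have := Nat.find_min hex (show N < L₀ by omega)
        simpa using this
      have h1 : flv v N < clv u N := lt_of_not_ge hnP
      have h2 := (flv_step v N).2
      have h3 := (clv_step u N).1
      rw [hL₁eq, hN]
      omega
  -- the chaining points
  set PU : ℕ → ℝ := fun j => pc u (L₁ + j) with hPUdef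
  set PV : ℕ → ℝ := fun j => pf v (L₁ + j) with hPVdef
  have hPUu : ∀ j, u ≤ PU j := fun j => pc_ge u _
  have hPVv : ∀ j, PV j ≤ v := fun j => pf_le v _
  have hPUPV : ∀ j, PU j ≤ PV j := by
    intro j
    have h : (clv u (L₁+j) : ℝ) ≤ (flv v (L₁+j) : ℝ) := by exact_mod_cast hUV j
    have hpos : (0:ℝ) < 2 ^ (L₁ + j) := by positivity
    show pc u (L₁+j) ≤ pf v (L₁+j)
    unfold pc pf
    gcongr
  have hPUv : ∀ j, PU j ≤ v := fun j => (hPUPV j).trans (hPVv j)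
  have hPVu : ∀ j, u ≤ PV j := fun j => (hPUu j).trans (hPUPV j)
  have hPUmem : ∀ j, PU j ∈ Set.Icc (-1:ℝ) 1 := fun j => ⟨hu.trans (hPUu j), (hPUv j).trans hv⟩
  have hPVmem : ∀ j, PV j ∈ Set.Icc (-1:ℝ) 1 := fun j => ⟨hu.trans (hPVu j), (hPVv j).trans hv⟩
  -- the level contributions
  set θ : ℕ → ℝ≥0∞ := fun j =>
    Nat.casesOn j (ENNReal.ofReal |f (PV 0) - f (PU 0)|)
      (fun i => ENNReal.ofReal |f (PV (i+1)) - f (PV i)| +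
        ENNReal.ofReal |f (PU i) - f (PU (i+1))|) with hθdef
  -- (C1) chaining bound on partial telescopes
  have hC1 : ∀ J, ENNReal.ofReal |f (PV J) - f (PU J)| ≤ ∑ j ∈ Finset.range (J+1), θ j := by
    intro J
    induction J with
    | zero => simp [hθdef]
    | succ J ih =>
      rw [Finset.sum_range_succ]
      have htri : |f (PV (J+1)) - f (PU (J+1))| ≤ |f (PV J) - f (PU J)| +
          (|f (PV (J+1)) - f (PV J)| + |f (PU J) - f (PU (J+1))|) := by
        have hdec : f (PV (J+1)) - f (PU (J+1)) = (f (PV J) - f (PU J)) +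
            ((f (PV (J+1)) - f (PV J)) + (f (PU J) - f (PU (J+1)))) := by ring
        rw [hdec]
        refine (abs_add_le _ _).trans ?_
        gcongr
        exact abs_add_le _ _
      calc ENNReal.ofReal |f (PV (J+1)) - f (PU (J+1))|
          ≤ ENNReal.ofReal (|f (PV J) - f (PU J)| +
              (|f (PV (J+1)) - f (PV J)| + |f (PU J) - f (PU (J+1))|)) :=
            ENNReal.ofReal_le_ofReal htri
        _ = ENNReal.ofReal |f (PV J) - f (PU J)| +
              (ENNReal.ofReal |f (PV (J+1)) - f (PV J)| +
               ENNReal.ofReal |f (PU J) - f (PU (J+1))|) := by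
            rw [ENNReal.ofReal_add (abs_nonneg _) (by positivity),
              ENNReal.ofReal_add (abs_nonneg _) (abs_nonneg _)]
        _ ≤ (∑ j ∈ Finset.range (J+1), θ j) + θ (J+1) := add_le_add ih le_rfl
  -- limits
  have htendaux : Tendsto (fun j : ℕ => ((2:ℝ)^(L₁+j))⁻¹) atTop (𝓝 0) := by
    have h1 : Tendsto (fun j : ℕ => (2:ℝ)^(L₁+j)) atTop atTop :=
      (tendsto_pow_atTop_atTop_of_one_lt one_lt_two).comp
        (tendsto_atTop_mono (fun j => Nat.le_add_left j L₁) tendsto_id)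
    exact h1.inv_tendsto_atTop
  have htendU : Tendsto PU atTop (𝓝 u) := by
    refine tendsto_of_tendsto_of_tendsto_of_le_of_le tendsto_const_nhds ?_ hPUu
      (fun j => pc_le u (L₁ + j))
    simpa using tendsto_const_nhds.add htendaux
  have htendV : Tendsto PV atTop (𝓝 v) := by
    refine tendsto_of_tendsto_of_tendsto_of_le_of_le ?_ tendsto_const_nhds
      (fun j => pf_ge v (L₁ + j)) hPVv
    simpa using tendsto_const_nhds.sub htendaux
  have hfu : Tendsto (fun j => f (PU j)) atTop (𝓝 (f u)) := by
    have hcw : ContinuousWithinAt f (Set.Icc (-1) 1) u := hf u ⟨hu, huv.le.trans hv⟩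
    apply hcw.tendsto.comp
    rw [tendsto_nhdsWithin_iff]
    exact ⟨htendU, Filter.Eventually.of_forall hPUmem⟩
  have hfv : Tendsto (fun j => f (PV j)) atTop (𝓝 (f v)) := by
    have hcw : ContinuousWithinAt f (Set.Icc (-1) 1) v := hf v ⟨hu.trans huv.le, hv⟩
    apply hcw.tendsto.comp
    rw [tendsto_nhdsWithin_iff]
    exact ⟨htendV, Filter.Eventually.of_forall hPVmem⟩
  have hC1' : ENNReal.ofReal |f v - f u| ≤ ∑' j, θ j := by
    have hlim : Tendsto (fun J => ENNReal.ofReal |f (PV J) - f (PU J)|) atTop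
        (𝓝 (ENNReal.ofReal |f v - f u|)) :=
      (ENNReal.continuous_ofReal.tendsto _).comp
        ((continuous_abs.tendsto _).comp (hfv.sub hfu))
    refine le_of_tendsto hlim ?_
    filter_upwards with J
    exact (hC1 J).trans (ENNReal.sum_le_tsum _)
  -- (C2) each level contribution is controlled by the localized dyadic sums
  -- V-side pieces
  have hVfacts : ∀ i : ℕ, (ENNReal.ofReal |f (PV (i+1)) - f (PV i)|)^p = 0 ∨
      ∃ k : ℕ, k < 2^(L₁+i+1+1) ∧ u ≤ grid (L₁+i+1) k ∧ grid (L₁+i+1) (k+1) ≤ v ∧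
        (ENNReal.ofReal |f (PV (i+1)) - f (PV i)|)^p = inc f p (L₁+i+1) k ∧
        (k : ℤ) = 2 * flv v (L₁+i) := by
    intro i
    have hstep := flv_step v (L₁ + i)
    have hflv0 : 0 ≤ flv v (L₁ + i) := le_trans (clv_nonneg hu _) (hUV i)
    rcases (by omega : flv v (L₁+i+1) = 2 * flv v (L₁+i) ∨
        flv v (L₁+i+1) = 2 * flv v (L₁+i) + 1) with he | he
    · left
      have hPVeq : PV (i+1) = PV i := by
        show pf v (L₁+i+1) = pf v (L₁+i)
        unfold pf
        rw [he]
        push_cast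
        field_simp
        ring
      rw [hPVeq, sub_self, abs_zero, ENNReal.ofReal_zero, ENNReal.zero_rpow_of_pos hp0]
    · right
      have hfle := flv_le_pow hv (L₁+i+1)
      refine ⟨(2 * flv v (L₁+i)).toNat, ?_, ?_, ?_, ?_, ?_⟩
      · have hb : ((2:ℕ)^(L₁+i+1+1) : ℤ) = 2^(L₁+i+1+1) := by push_cast; ring
        omega
      · have hgr : grid (L₁+i+1) (2 * flv v (L₁+i)).toNat = PV i := by
          unfold grid
          show _ = pf v (L₁ + i)
          unfold pf
          have hc : (((2 * flv v (L₁+i)).toNat : ℕ) : ℝ) = 2 * (flv v (L₁+i) : ℝ) := by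
            have := Int.toNat_of_nonneg (by omega : (0:ℤ) ≤ 2 * flv v (L₁+i))
            exact_mod_cast congrArg (Int.cast : ℤ → ℝ) this
          rw [hc]
          have hpos : (0:ℝ) < 2 ^ (L₁+i) := by positivity
          field_simp
          ring
        rw [hgr]; exact hPVu i
      · have hgr : grid (L₁+i+1) ((2 * flv v (L₁+i)).toNat + 1) = PV (i+1) := by
          unfold grid
          show _ = pf v (L₁ + i + 1)
          unfold pf
          have hc : (((2 * flv v (L₁+i)).toNat + 1 : ℕ) : ℝ) = (flv v (L₁+i+1) : ℝ) := by
            have h1 := Int.toNat_of_nonneg (by omega : (0:ℤ) ≤ 2 * flv v (L₁+i))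
            have : ((2 * flv v (L₁+i)).toNat : ℤ) + 1 = flv v (L₁+i+1) := by omega
            exact_mod_cast congrArg (Int.cast : ℤ → ℝ) this
          rw [hc]
        rw [hgr]; exact hPVv (i+1)
      · have hgr : grid (L₁+i+1) (2 * flv v (L₁+i)).toNat = PV i := by
          unfold grid
          show _ = pf v (L₁ + i)
          unfold pf
          have hc : (((2 * flv v (L₁+i)).toNat : ℕ) : ℝ) = 2 * (flv v (L₁+i) : ℝ) := by
            have := Int.toNat_of_nonneg (by omega : (0:ℤ) ≤ 2 * flv v (L₁+i))
            exact_mod_cast congrArg (Int.cast : ℤ → ℝ) this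
          rw [hc]
          have hpos : (0:ℝ) < 2 ^ (L₁+i) := by positivity
          field_simp
          ring
        have hgr' : grid (L₁+i+1) ((2 * flv v (L₁+i)).toNat + 1) = PV (i+1) := by
          unfold grid
          show _ = pf v (L₁ + i + 1)
          unfold pf
          have hc : (((2 * flv v (L₁+i)).toNat + 1 : ℕ) : ℝ) = (flv v (L₁+i+1) : ℝ) := by
            have h1 := Int.toNat_of_nonneg (by omega : (0:ℤ) ≤ 2 * flv v (L₁+i))
            have : ((2 * flv v (L₁+i)).toNat : ℤ) + 1 = flv v (L₁+i+1) := by omega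
            exact_mod_cast congrArg (Int.cast : ℤ → ℝ) this
          rw [hc]
        unfold inc
        rw [hgr, hgr', ofReal_abs_rpow hp0.le]
      · exact Int.toNat_of_nonneg (by omega)
  -- U-side pieces
  have hUfacts : ∀ i : ℕ, (ENNReal.ofReal |f (PU i) - f (PU (i+1))|)^p = 0 ∨
      ∃ k : ℕ, k < 2^(L₁+i+1+1) ∧ u ≤ grid (L₁+i+1) k ∧ grid (L₁+i+1) (k+1) ≤ v ∧
        (ENNReal.ofReal |f (PU i) - f (PU (i+1))|)^p = inc f p (L₁+i+1) k ∧
        (k : ℤ) = 2 * clv u (L₁+i) - 1 := by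
    intro i
    have hstep := clv_step u (L₁ + i)
    have hclv0 : 0 ≤ clv u (L₁ + i + 1) := clv_nonneg hu _
    have hclv0' : 0 ≤ clv u (L₁ + i) := clv_nonneg hu _
    rcases (by omega : clv u (L₁+i+1) = 2 * clv u (L₁+i) ∨
        clv u (L₁+i+1) = 2 * clv u (L₁+i) - 1) with he | he
    · left
      have hPUeq : PU (i+1) = PU i := by
        show pc u (L₁+i+1) = pc u (L₁+i)
        unfold pc
        rw [he]
        push_cast
        field_simp
        ring
      rw [hPUeq, sub_self, abs_zero, ENNReal.ofReal_zero, ENNReal.zero_rpow_of_pos hp0]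
    · right
      have hfle := flv_le_pow hv (L₁+i+1)
      have h2fl := (flv_step v (L₁+i)).1
      have hUV' := hUV i
      have hgr : grid (L₁+i+1) (clv u (L₁+i+1)).toNat = PU (i+1) := by
        unfold grid
        show _ = pc u (L₁ + i + 1)
        unfold pc
        have hc : (((clv u (L₁+i+1)).toNat : ℕ) : ℝ) = (clv u (L₁+i+1) : ℝ) := by
          exact_mod_cast congrArg (Int.cast : ℤ → ℝ) (Int.toNat_of_nonneg hclv0)
        rw [hc]
      have hgr' : grid (L₁+i+1) ((clv u (L₁+i+1)).toNat + 1) = PU i := by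
        unfold grid
        show _ = pc u (L₁ + i)
        unfold pc
        have hc : (((clv u (L₁+i+1)).toNat + 1 : ℕ) : ℝ) = 2 * (clv u (L₁+i) : ℝ) := by
          have h1 : ((clv u (L₁+i+1)).toNat : ℤ) + 1 = 2 * clv u (L₁+i) := by omega
          exact_mod_cast congrArg (Int.cast : ℤ → ℝ) h1
        rw [hc]
        have hpos : (0:ℝ) < 2 ^ (L₁+i) := by positivity
        field_simp
        ring
      refine ⟨(clv u (L₁+i+1)).toNat, ?_, ?_, ?_, ?_, ?_⟩
      · have hb : ((2:ℕ)^(L₁+i+1+1) : ℤ) = 2^(L₁+i+1+1) := by push_cast; ring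
        omega
      · rw [hgr]; exact hPUu (i+1)
      · rw [hgr']; exact hPUv i
      · unfold inc
        rw [hgr, hgr', ofReal_abs_rpow hp0.le]
      · omega
  -- each level contribution is controlled by the localized dyadic variation
  have h2p1 : (1:ℝ≥0∞) ≤ ENNReal.ofReal (2^(p-1)) := by
    rw [ENNReal.one_le_ofReal]
    calc (1:ℝ) = 2 ^ (0:ℝ) := by rw [Real.rpow_zero]
      _ ≤ 2 ^ (p-1) := Real.rpow_le_rpow_of_exponent_le one_le_two hp1
  have h2e : ((2:ℝ≥0∞))^(p-1) = ENNReal.ofReal (2^(p-1)) := by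
    rw [show ((2:ℝ≥0∞)) = ENNReal.ofReal 2 by norm_num,
      ENNReal.ofReal_rpow_of_nonneg (by norm_num) hp1]
  have hPL₁ : clv u L₁ ≤ flv v L₁ := hmono _ (le_max_right _ _)
  have hC2 : ∀ j, θ j ^ p ≤ ENNReal.ofReal (2^(p-1)) * sig f p (L₁ + j) u v := by
    intro j
    cases j with
    | zero =>
      show (ENNReal.ofReal |f (PV 0) - f (PU 0)|)^p ≤ _
      rcases (by omega : flv v L₁ = clv u L₁ ∨ flv v L₁ = clv u L₁ + 1) with he | he
      · have hPVeq : PV 0 = PU 0 := by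
          show pf v (L₁ + 0) = pc u (L₁ + 0)
          unfold pf pc
          rw [show L₁ + 0 = L₁ from rfl, he]
        rw [hPVeq, sub_self, abs_zero, ENNReal.ofReal_zero, ENNReal.zero_rpow_of_pos hp0]
        exact zero_le
      · have hcl0 : 0 ≤ clv u L₁ := clv_nonneg hu _
        have hgr : grid L₁ (clv u L₁).toNat = PU 0 := by
          unfold grid
          show _ = pc u (L₁ + 0)
          rw [show L₁ + 0 = L₁ from rfl]
          unfold pc
          have hc : (((clv u L₁).toNat : ℕ) : ℝ) = (clv u L₁ : ℝ) := by
            exact_mod_cast congrArg (Int.cast : ℤ → ℝ) (Int.toNat_of_nonneg hcl0)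
          rw [hc]
        have hgr' : grid L₁ ((clv u L₁).toNat + 1) = PV 0 := by
          unfold grid
          show _ = pf v (L₁ + 0)
          rw [show L₁ + 0 = L₁ from rfl]
          unfold pf
          have hc : (((clv u L₁).toNat + 1 : ℕ) : ℝ) = (flv v L₁ : ℝ) := by
            have h1 : ((clv u L₁).toNat : ℤ) + 1 = flv v L₁ := by omega
            exact_mod_cast congrArg (Int.cast : ℤ → ℝ) h1
          rw [hc]
        have hfle := flv_le_pow hv L₁
        have hk : (clv u L₁).toNat < 2 ^ (L₁ + 1) := by
          have hb : ((2:ℕ)^(L₁+1) : ℤ) = 2^(L₁+1) := by push_cast; ring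
          omega
        have heq : (ENNReal.ofReal |f (PV 0) - f (PU 0)|)^p = inc f p L₁ (clv u L₁).toNat := by
          unfold inc
          rw [hgr, hgr', ofReal_abs_rpow hp0.le]
        rw [heq]
        calc inc f p L₁ (clv u L₁).toNat ≤ sig f p L₁ u v := by
              refine inc_le_sig ?_ ?_ hk
              · rw [hgr]; exact hPUu 0
              · rw [hgr']; exact hPVv 0
          _ ≤ ENNReal.ofReal (2^(p-1)) * sig f p (L₁ + 0) u v :=
              le_mul_of_one_le_left (zero_le) h2p1
    | succ i =>
      show (ENNReal.ofReal |f (PV (i+1)) - f (PV i)| +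
        ENNReal.ofReal |f (PU i) - f (PU (i+1))|)^p ≤
        ENNReal.ofReal (2^(p-1)) * sig f p (L₁+i+1) u v
      set X := ENNReal.ofReal |f (PV (i+1)) - f (PV i)| with hXdef
      set Y := ENNReal.ofReal |f (PU i) - f (PU (i+1))| with hYdef
      have hXY : X^p + Y^p ≤ sig f p (L₁+i+1) u v := by
        rcases hVfacts i with hx | ⟨k, hkr, hk1, hk2, hkeq, hkid⟩ <;>
          rcases hUfacts i with hy | ⟨k', hkr', hk1', hk2', hkeq', hkid'⟩
        · rw [hx, hy, add_zero]; exact zero_le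
        · rw [hx, zero_add, hkeq']; exact inc_le_sig hk1' hk2' hkr'
        · rw [hy, add_zero, hkeq]; exact inc_le_sig hk1 hk2 hkr
        · rw [hkeq, hkeq']
          have hne : k ≠ k' := by
            have := hUV i
            omega
          exact pair_le_sig hne hk1 hk2 hkr hk1' hk2' hkr'
      calc (X + Y)^p ≤ (2:ℝ≥0∞)^(p-1) * (X^p + Y^p) :=
            ENNReal.rpow_add_le_mul_rpow_add_rpow X Y hp.le
        _ = ENNReal.ofReal (2^(p-1)) * (X^p + Y^p) := by rw [h2e]
        _ ≤ ENNReal.ofReal (2^(p-1)) * sig f p (L₁+i+1) u v := mul_le_mul_right hXY _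
  -- Hoelder inequality
  have hp0' : p ≠ 0 := hp0.ne'
  have hpm1 : p - 1 ≠ 0 := by intro h; rw [sub_eq_zero] at h; exact (by linarith : (1:ℝ) ≠ p) h.symm
  set q := p / (p-1) with hqdef
  have hq1 : 1 < q := by
    rw [hqdef, lt_div_iff₀ (by linarith : (0:ℝ) < p - 1)]
    linarith
  have hq0 : 0 < q := lt_trans one_pos hq1
  have hpq : Real.HolderConjugate q p := by
    refine Real.holderConjugate_iff.mpr ⟨hq1, ?_⟩
    rw [hqdef]
    field_simp
    ring
  set w : ℕ → ℝ≥0∞ := fun j => ENNReal.ofReal (((j:ℝ)+1)^α) with hwdef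
  set winv : ℕ → ℝ≥0∞ := fun j => ENNReal.ofReal (((j:ℝ)+1)^(-α)) with hwinvdef
  have hj1 : ∀ j : ℕ, (0:ℝ) < (j:ℝ)+1 := fun j => by positivity
  have hwmul : ∀ j, winv j * (w j * θ j) = θ j := by
    intro j
    rw [hwdef, hwinvdef]
    dsimp only
    rw [← mul_assoc, ← ENNReal.ofReal_mul (Real.rpow_nonneg (hj1 j).le _),
      ← Real.rpow_add (hj1 j), neg_add_cancel, Real.rpow_zero, ENNReal.ofReal_one, one_mul]
  have hmeas : ∀ g : ℕ → ℝ≥0∞, AEMeasurable g (Measure.count) :=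
    fun g => measurable_from_top.aemeasurable
  have hHolder : ∑' j, θ j ≤
      (∑' j, winv j ^ q)^(1/q) * (∑' j, (w j * θ j)^p)^(1/p) := by
    have h := ENNReal.lintegral_mul_le_Lp_mul_Lq (Measure.count (α := ℕ)) hpq
      (hmeas winv) (hmeas (fun j => w j * θ j))
    rw [lintegral_count, lintegral_count, lintegral_count] at h
    have hre : ∑' (a:ℕ), (winv * fun j => w j * θ j) a = ∑' j, θ j := by
      apply tsum_congr; intro j; rw [Pi.mul_apply, hwmul]
    rw [hre] at h
    exact h
  -- identify the two factors
  have hs1 : 1 < α * p / (p-1) := by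
    rw [lt_div_iff₀ (by linarith : (0:ℝ) < p - 1)]
    have h2 := mul_lt_mul_of_pos_right hα hp0
    have h3 : (1 - 1/p) * p = p - 1 := by field_simp
    linarith [h3 ▸ h2]
  have hsummable : Summable (fun n : ℕ => ((n:ℝ)+1)^(-(α*p/(p-1)))) := by
    have h1 : Summable (fun n : ℕ => ((n:ℝ))^(-(α*p/(p-1)))) :=
      Real.summable_nat_rpow.mpr (by linarith)
    have h2 := (summable_nat_add_iff 1).mpr h1
    refine h2.congr fun n => ?_
    push_cast
    rfl
  have hrealA0 : (0:ℝ) ≤ ∑' n : ℕ, ((n:ℝ)+1)^(-(α*p/(p-1))) :=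
    tsum_nonneg fun n => Real.rpow_nonneg (by positivity) _
  have hYeq : (∑' j, winv j ^ q) =
      ENNReal.ofReal (∑' n : ℕ, ((n:ℝ)+1)^(-(α*p/(p-1)))) := by
    rw [ENNReal.ofReal_tsum_of_nonneg (fun n => Real.rpow_nonneg (by positivity) _) hsummable]
    apply tsum_congr
    intro j
    rw [hwinvdef]
    dsimp only
    rw [ENNReal.ofReal_rpow_of_nonneg (Real.rpow_nonneg (hj1 j).le _) hq0.le,
      ← Real.rpow_mul (hj1 j).le]
    congr 1
    rw [hqdef]
    field_simp
  set s₀ := L₁ - nh with hs₀def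
  have hX : (∑' j, (w j * θ j)^p) ≤ ENNReal.ofReal (2^(p-1)) * Wfun f p α nh u v := by
    have hterm : ∀ j : ℕ, (w j * θ j)^p ≤ ENNReal.ofReal (2^(p-1)) *
        (ENNReal.ofReal ((((s₀+j:ℕ):ℝ)+1)^(α*p)) * sig f p ((s₀+j) + nh) u v) := by
      intro j
      rw [ENNReal.mul_rpow_of_nonneg _ _ hp0.le]
      have hw : w j ^ p = ENNReal.ofReal (((j:ℝ)+1)^(α*p)) := by
        rw [hwdef]
        dsimp only
        rw [ENNReal.ofReal_rpow_of_nonneg (Real.rpow_nonneg (hj1 j).le _) hp0.le,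
          ← Real.rpow_mul (hj1 j).le]
      rw [hw]
      have hle1 : ENNReal.ofReal (((j:ℝ)+1)^(α*p)) ≤
          ENNReal.ofReal ((((s₀+j:ℕ):ℝ)+1)^(α*p)) := by
        apply ENNReal.ofReal_le_ofReal
        apply Real.rpow_le_rpow (hj1 j).le _ hαp
        push_cast
        linarith [Nat.cast_nonneg (α := ℝ) s₀]
      have hidx : L₁ + j = (s₀ + j) + nh := by omega
      calc ENNReal.ofReal (((j:ℝ)+1)^(α*p)) * θ j ^ p
          ≤ ENNReal.ofReal ((((s₀+j:ℕ):ℝ)+1)^(α*p)) *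
            (ENNReal.ofReal (2^(p-1)) * sig f p (L₁ + j) u v) :=
            mul_le_mul' hle1 (hC2 j)
        _ = ENNReal.ofReal (2^(p-1)) *
            (ENNReal.ofReal ((((s₀+j:ℕ):ℝ)+1)^(α*p)) * sig f p ((s₀+j) + nh) u v) := by
            rw [hidx]; ring
    calc (∑' j, (w j * θ j)^p)
        ≤ ∑' j, ENNReal.ofReal (2^(p-1)) *
          (ENNReal.ofReal ((((s₀+j:ℕ):ℝ)+1)^(α*p)) * sig f p ((s₀+j) + nh) u v) :=
          ENNReal.tsum_le_tsum hterm
      _ = ENNReal.ofReal (2^(p-1)) * ∑' j,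
          (ENNReal.ofReal ((((s₀+j:ℕ):ℝ)+1)^(α*p)) * sig f p ((s₀+j) + nh) u v) :=
          ENNReal.tsum_mul_left
      _ ≤ ENNReal.ofReal (2^(p-1)) * Wfun f p α nh u v := by
          apply mul_le_mul_right
          exact ENNReal.tsum_comp_le_tsum_of_injective (add_right_injective s₀)
            (fun n => ENNReal.ofReal ((((n:ℕ):ℝ)+1)^(α*p)) * sig f p (n + nh) u v)
  -- put everything together
  have hcp : (cConst α p)^p = (∑' n : ℕ, ((n:ℝ)+1)^(-(α*p/(p-1))))^(p-1) := by
    rw [cConst, ← Real.rpow_mul hrealA0]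
    congr 1
    field_simp
  calc (ENNReal.ofReal |f v - f u|) ^ p
      ≤ (∑' j, θ j)^p := ENNReal.rpow_le_rpow hC1' hp0.le
    _ ≤ ((∑' j, winv j ^ q)^(1/q) * (∑' j, (w j * θ j)^p)^(1/p))^p :=
        ENNReal.rpow_le_rpow hHolder hp0.le
    _ = (∑' j, winv j ^ q)^(p-1) * (∑' j, (w j * θ j)^p) := by
        rw [ENNReal.mul_rpow_of_nonneg _ _ hp0.le, ← ENNReal.rpow_mul, ← ENNReal.rpow_mul]
        congr 1
        · congr 1
          rw [hqdef, one_div_div, div_mul_cancel₀ _ hp0']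
        · rw [one_div, inv_mul_cancel₀ hp0', ENNReal.rpow_one]
    _ ≤ (∑' j, winv j ^ q)^(p-1) * (ENNReal.ofReal (2^(p-1)) * Wfun f p α nh u v) :=
        mul_le_mul_right hX _
    _ = ENNReal.ofReal (2 ^ (p - 1) * (cConst α p) ^ p) * Wfun f p α nh u v := by
        rw [hYeq, ENNReal.ofReal_rpow_of_nonneg hrealA0 hp1, ← mul_assoc,
          ← ENNReal.ofReal_mul (Real.rpow_nonneg hrealA0 _), hcp]
        congr 2
        exact mul_comm _ _

end
end FrameAux

/-- `p`-variation norm bound for the frame increments: for `p > 1`, `α > 1 - 1/p`,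
`f ∈ C([-1,1])` and `0 ≤ h₁ < h₂ ≤ 1`, with `nh = n(h₂ - h₁)`,
`‖T_{h₂}^f - T_{h₁}^f‖_∞ + V_p(T_{h₂}^f - T_{h₁}^f) ≤ (4 + 2^{(p-1)/p}) c(α,p) S_p(f,h₂-h₁,α)^{1/p}`
in `[0,∞]`. -/
theorem frame_pnorm_bound (p α : ℝ) (hp : 1 < p) (hα : 1 - 1/p < α)
    (f : ℝ → ℝ) (hf : ContinuousOn f (Set.Icc (-1) 1))
    (h₁ h₂ : ℝ) (hh₁ : 0 ≤ h₁) (hh : h₁ < h₂) (hh₂ : h₂ ≤ 1)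
    (nh : ℕ) (hn1 : (2:ℝ) ^ (-(nh:ℤ)) ≤ h₂ - h₁) (hn2 : h₂ - h₁ < (2:ℝ) ^ (-(nh:ℤ) + 1)) :
    (⨆ u : Set.Icc (0:ℝ) 1, ENNReal.ofReal |f (h₂ - 1 + u) - f (h₁ - 1 + u)|) +
        pVar p (fun u => f (h₂ - 1 + u) - f (h₁ - 1 + u)) ≤
      ENNReal.ofReal ((4 + 2 ^ ((p - 1) / p)) * cConst α p) * (Sp f nh α p) ^ (1/p) := by
  classical
  have hp0 : (0:ℝ) < p := lt_trans one_pos hp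
  have hp1 : (0:ℝ) ≤ p - 1 := by linarith
  have hip : (0:ℝ) ≤ 1/p := by positivity
  have hδ : 0 < h₂ - h₁ := sub_pos.mpr hh
  have hlen : h₂ - h₁ < 2 * ((2:ℝ)^nh)⁻¹ := by
    have he : (2:ℝ) ^ (-(nh:ℤ) + 1) = 2 * ((2:ℝ)^nh)⁻¹ := by
      rw [zpow_add₀ (two_ne_zero), zpow_one, zpow_neg, zpow_natCast]
      ring
    rw [he] at hn2
    exact hn2
  set c := cConst α p with hcdef
  have hc0 : 0 ≤ c :=
    Real.rpow_nonneg (tsum_nonneg fun n => Real.rpow_nonneg (by positivity) _) _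
  set K : ℝ≥0∞ := ENNReal.ofReal (2 ^ (p - 1) * c ^ p) with hKdef
  have hKr0 : (0:ℝ) ≤ 2 ^ (p - 1) * c ^ p :=
    mul_nonneg (Real.rpow_nonneg (by norm_num) _) (Real.rpow_nonneg hc0 _)
  have hKconst : K ^ (1/p) = ENNReal.ofReal (2^((p-1)/p) * c) := by
    rw [hKdef, ENNReal.ofReal_rpow_of_nonneg hKr0 hip]
    congr 1
    rw [Real.mul_rpow (Real.rpow_nonneg (by norm_num) _) (Real.rpow_nonneg hc0 _),
      ← Real.rpow_mul (by norm_num : (0:ℝ) ≤ 2), ← Real.rpow_mul hc0,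
      mul_one_div, mul_one_div, div_self hp0.ne', Real.rpow_one]
  -- the supremum part
  have hsup : (⨆ u : Set.Icc (0:ℝ) 1, ENNReal.ofReal |f (h₂ - 1 + u) - f (h₁ - 1 + u)|) ≤
      ENNReal.ofReal (2^((p-1)/p) * c) * (Sp f nh α p)^(1/p) := by
    apply iSup_le
    rintro ⟨x, hx0, hx1⟩
    have hkey := FrameAux.chain_pow hp hα hf (u := h₁ - 1 + x) (v := h₂ - 1 + x)
      (by linarith) (by linarith) (by linarith) (by linarith)
    have h1 : (ENNReal.ofReal |f (h₂-1+x) - f (h₁-1+x)|)^p ≤ K * Sp f nh α p :=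
      hkey.trans (mul_le_mul_right FrameAux.W_le_Sp _)
    have h2 : ENNReal.ofReal |f (h₂-1+x) - f (h₁-1+x)| ≤ (K * Sp f nh α p)^(1/p) := by
      have h3 := ENNReal.rpow_le_rpow h1 hip
      rwa [← ENNReal.rpow_mul, mul_one_div, div_self hp0.ne', ENNReal.rpow_one] at h3
    refine h2.trans ?_
    rw [ENNReal.mul_rpow_of_nonneg _ _ hip, hKconst]
  -- the p-variation part
  have hpvar : pVar p (fun x => f (h₂ - 1 + x) - f (h₁ - 1 + x)) ≤
      ENNReal.ofReal (2^((2*p-1)/p) * c) * (Sp f nh α p)^(1/p) := by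
    apply iSup_le; intro n
    apply iSup_le; intro t
    apply iSup_le; intro ht
    apply iSup_le; intro h0
    apply iSup_le; intro hlast
    have ht0 : ∀ i : Fin (n+1), 0 ≤ t i := fun i => h0 ▸ ht.monotone (Fin.zero_le i)
    have ht1 : ∀ i : Fin (n+1), t i ≤ 1 := fun i => hlast ▸ ht.monotone (Fin.le_last i)
    have hstep : ∀ i : Fin n, t i.castSucc < t i.succ := fun i => ht (i.castSucc_lt_succ)
    set uX : Fin n → ℝ := fun i =>
      if t i.succ - t i.castSucc ≤ h₂ - h₁ then h₂ - 1 + t i.castSucc else h₁ - 1 + t i.succ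
      with huXdef
    set vX : Fin n → ℝ := fun i => h₂ - 1 + t i.succ with hvXdef
    set uY : Fin n → ℝ := fun i => h₁ - 1 + t i.castSucc with huYdef
    set vY : Fin n → ℝ := fun i =>
      if t i.succ - t i.castSucc ≤ h₂ - h₁ then h₁ - 1 + t i.succ else h₂ - 1 + t i.castSucc
      with hvYdef
    have hXbound : ∀ i : Fin n, (ENNReal.ofReal |f (vX i) - f (uX i)|)^p ≤
        K * FrameAux.Wfun f p α nh (uX i) (vX i) := by
      intro i
      have hb1 := ht0 i.castSucc
      have hb2 := ht1 i.succ
      have hb3 := hstep i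
      have hb4 := ht0 i.succ
      by_cases hA : t i.succ - t i.castSucc ≤ h₂ - h₁
      · simp only [huXdef, hvXdef, if_pos hA]
        exact FrameAux.chain_pow hp hα hf (by linarith) (by linarith) (by linarith) (by linarith)
      · push_neg at hA
        simp only [huXdef, hvXdef, if_neg (not_le.mpr hA)]
        exact FrameAux.chain_pow hp hα hf (by linarith) (by linarith) (by linarith) (by linarith)
    have hYbound : ∀ i : Fin n, (ENNReal.ofReal |f (vY i) - f (uY i)|)^p ≤
        K * FrameAux.Wfun f p α nh (uY i) (vY i) := by
      intro i
      have hb1 := ht0 i.castSucc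
      have hb2 := ht1 i.succ
      have hb3 := hstep i
      have hb5 := ht1 i.castSucc
      by_cases hA : t i.succ - t i.castSucc ≤ h₂ - h₁
      · simp only [huYdef, hvYdef, if_pos hA]
        exact FrameAux.chain_pow hp hα hf (by linarith) (by linarith) (by linarith) (by linarith)
      · push_neg at hA
        simp only [huYdef, hvYdef, if_neg (not_le.mpr hA)]
        exact FrameAux.chain_pow hp hα hf (by linarith) (by linarith) (by linarith) (by linarith)
    have hordX : ∀ i j : Fin n, i < j → vX i ≤ uX j := by
      intro i j hij
      have hvlt : (i:ℕ) < (j:ℕ) := hij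
      have hmt : t i.succ ≤ t j.castSucc := by
        apply ht.monotone
        rw [Fin.le_def]
        simp only [Fin.val_succ, Fin.coe_castSucc]
        omega
      simp only [huXdef, hvXdef]
      by_cases hA : t j.succ - t j.castSucc ≤ h₂ - h₁
      · rw [if_pos hA]; linarith
      · push_neg at hA
        rw [if_neg (not_le.mpr hA)]
        linarith
    have hordY : ∀ i j : Fin n, i < j → vY i ≤ uY j := by
      intro i j hij
      have hvlt : (i:ℕ) < (j:ℕ) := hij
      have hmt : t i.succ ≤ t j.castSucc := by
        apply ht.monotone
        rw [Fin.le_def]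
        simp only [Fin.val_succ, Fin.coe_castSucc]
        omega
      simp only [huYdef, hvYdef]
      by_cases hA : t i.succ - t i.castSucc ≤ h₂ - h₁
      · rw [if_pos hA]; linarith
      · push_neg at hA
        rw [if_neg (not_le.mpr hA)]
        linarith
    have hdecomp : ∀ i : Fin n,
        ENNReal.ofReal |(f (h₂-1+t i.succ) - f (h₁-1+t i.succ)) -
          (f (h₂-1+t i.castSucc) - f (h₁-1+t i.castSucc))| ≤
        ENNReal.ofReal |f (vX i) - f (uX i)| + ENNReal.ofReal |f (vY i) - f (uY i)| := by
      intro i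
      have hiden : (f (h₂-1+t i.succ) - f (h₁-1+t i.succ)) -
          (f (h₂-1+t i.castSucc) - f (h₁-1+t i.castSucc)) =
          (f (vX i) - f (uX i)) + (f (uY i) - f (vY i)) := by
        by_cases hA : t i.succ - t i.castSucc ≤ h₂ - h₁
        · simp only [huXdef, hvXdef, huYdef, hvYdef, if_pos hA]; ring
        · push_neg at hA
          simp only [huXdef, hvXdef, huYdef, hvYdef, if_neg (not_le.mpr hA)]; ring
      rw [hiden]
      have htri := abs_add_le (f (vX i) - f (uX i)) (f (uY i) - f (vY i))
      rw [abs_sub_comm (f (uY i)) (f (vY i))] at htri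
      calc ENNReal.ofReal |(f (vX i) - f (uX i)) + (f (uY i) - f (vY i))|
          ≤ ENNReal.ofReal (|f (vX i) - f (uX i)| + |f (vY i) - f (uY i)|) :=
            ENNReal.ofReal_le_ofReal htri
        _ = _ := ENNReal.ofReal_add (abs_nonneg _) (abs_nonneg _)
    have h2e : ((2:ℝ≥0∞))^(p-1) = ENNReal.ofReal (2^(p-1)) := by
      rw [show ((2:ℝ≥0∞)) = ENNReal.ofReal 2 by norm_num,
        ENNReal.ofReal_rpow_of_nonneg (by norm_num) hp1]
    have hsum : (∑ i : Fin n, (ENNReal.ofReal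
        |(f (h₂-1+t i.succ) - f (h₁-1+t i.succ)) -
          (f (h₂-1+t i.castSucc) - f (h₁-1+t i.castSucc))|)^p) ≤
        ENNReal.ofReal (2^(p-1)) * (K * Sp f nh α p + K * Sp f nh α p) := by
      have hX' : (∑ i : Fin n, (ENNReal.ofReal |f (vX i) - f (uX i)|)^p) ≤ K * Sp f nh α p := by
        calc (∑ i : Fin n, (ENNReal.ofReal |f (vX i) - f (uX i)|)^p)
            ≤ ∑ i : Fin n, K * FrameAux.Wfun f p α nh (uX i) (vX i) :=
              Finset.sum_le_sum fun i _ => hXbound i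
          _ = K * ∑ i : Fin n, FrameAux.Wfun f p α nh (uX i) (vX i) := by
              rw [Finset.mul_sum]
          _ ≤ K * Sp f nh α p := mul_le_mul_right (FrameAux.sum_W_le uX vX hordX) _
      have hY' : (∑ i : Fin n, (ENNReal.ofReal |f (vY i) - f (uY i)|)^p) ≤ K * Sp f nh α p := by
        calc (∑ i : Fin n, (ENNReal.ofReal |f (vY i) - f (uY i)|)^p)
            ≤ ∑ i : Fin n, K * FrameAux.Wfun f p α nh (uY i) (vY i) :=
              Finset.sum_le_sum fun i _ => hYbound i
          _ = K * ∑ i : Fin n, FrameAux.Wfun f p α nh (uY i) (vY i) := by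
              rw [Finset.mul_sum]
          _ ≤ K * Sp f nh α p := mul_le_mul_right (FrameAux.sum_W_le uY vY hordY) _
      calc (∑ i : Fin n, (ENNReal.ofReal
            |(f (h₂-1+t i.succ) - f (h₁-1+t i.succ)) -
              (f (h₂-1+t i.castSucc) - f (h₁-1+t i.castSucc))|)^p)
          ≤ ∑ i : Fin n, ((ENNReal.ofReal |f (vX i) - f (uX i)| +
              ENNReal.ofReal |f (vY i) - f (uY i)|)^p) :=
            Finset.sum_le_sum fun i _ => ENNReal.rpow_le_rpow (hdecomp i) hp0.le
        _ ≤ ∑ i : Fin n, ((2:ℝ≥0∞))^(p-1) * ((ENNReal.ofReal |f (vX i) - f (uX i)|)^p +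
              (ENNReal.ofReal |f (vY i) - f (uY i)|)^p) :=
            Finset.sum_le_sum fun i _ => ENNReal.rpow_add_le_mul_rpow_add_rpow _ _ hp.le
        _ = ((2:ℝ≥0∞))^(p-1) * ((∑ i : Fin n, (ENNReal.ofReal |f (vX i) - f (uX i)|)^p) +
              (∑ i : Fin n, (ENNReal.ofReal |f (vY i) - f (uY i)|)^p)) := by
            rw [← Finset.mul_sum, Finset.sum_add_distrib]
        _ ≤ ((2:ℝ≥0∞))^(p-1) * (K * Sp f nh α p + K * Sp f nh α p) :=
            mul_le_mul_right (add_le_add hX' hY') _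
        _ = ENNReal.ofReal (2^(p-1)) * (K * Sp f nh α p + K * Sp f nh α p) := by rw [h2e]
    -- collect the constants
    have hcollect : ENNReal.ofReal (2^(p-1)) * (K * Sp f nh α p + K * Sp f nh α p) =
        ENNReal.ofReal (2^(p-1) * 2 * (2^(p-1) * c^p)) * Sp f nh α p := by
      rw [← two_mul, hKdef, show ((2:ℝ≥0∞)) = ENNReal.ofReal 2 by norm_num]
      rw [← mul_assoc, ← mul_assoc, ← ENNReal.ofReal_mul (Real.rpow_nonneg (by norm_num) _),
        ← ENNReal.ofReal_mul (by positivity)]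
    have hC2 : ((2:ℝ)^(p-1) * 2 * (2^(p-1) * c^p))^(1/p) = 2^((2*p-1)/p) * c := by
      have e1 : (2:ℝ)^(p-1) * 2 * (2^(p-1) * c^p) = 2^(2*p-1) * c^p := by
        rw [show (2:ℝ)^(2*p-1) = 2^((p-1) + 1 + (p-1)) by congr 1; ring]
        rw [Real.rpow_add two_pos, Real.rpow_add two_pos, Real.rpow_one]
        ring
      rw [e1, Real.mul_rpow (Real.rpow_nonneg (by norm_num) _) (Real.rpow_nonneg hc0 _),
        ← Real.rpow_mul (by norm_num : (0:ℝ) ≤ 2), ← Real.rpow_mul hc0,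
        mul_one_div, mul_one_div, div_self hp0.ne', Real.rpow_one]
    have hfin : (∑ i : Fin n, (ENNReal.ofReal
        |(f (h₂-1+t i.succ) - f (h₁-1+t i.succ)) -
          (f (h₂-1+t i.castSucc) - f (h₁-1+t i.castSucc))|)^p)^(1/p) ≤
        ENNReal.ofReal (2^((2*p-1)/p) * c) * (Sp f nh α p)^(1/p) := by
      have h1 := ENNReal.rpow_le_rpow (hsum.trans_eq hcollect) hip
      refine h1.trans ?_
      rw [ENNReal.mul_rpow_of_nonneg _ _ hip,
        ENNReal.ofReal_rpow_of_nonneg (by positivity) hip, hC2]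
    rw [show (p⁻¹ : ℝ) = 1/p by rw [one_div]]
    simp only [Real.norm_eq_abs]
    exact hfin
  calc (⨆ u : Set.Icc (0:ℝ) 1, ENNReal.ofReal |f (h₂ - 1 + u) - f (h₁ - 1 + u)|) +
        pVar p (fun u => f (h₂ - 1 + u) - f (h₁ - 1 + u))
      ≤ ENNReal.ofReal (2^((p-1)/p) * c) * (Sp f nh α p)^(1/p) +
        ENNReal.ofReal (2^((2*p-1)/p) * c) * (Sp f nh α p)^(1/p) := add_le_add hsup hpvar
    _ = ENNReal.ofReal (2^((p-1)/p) * c + 2^((2*p-1)/p) * c) * (Sp f nh α p)^(1/p) := by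
        rw [ENNReal.ofReal_add (mul_nonneg (Real.rpow_nonneg (by norm_num) _) hc0)
          (mul_nonneg (Real.rpow_nonneg (by norm_num) _) hc0), add_mul]
    _ ≤ ENNReal.ofReal ((4 + 2 ^ ((p - 1) / p)) * c) * (Sp f nh α p)^(1/p) := by
        apply mul_le_mul_left
        apply ENNReal.ofReal_le_ofReal
        have h4 : (2:ℝ)^((2*p-1)/p) ≤ 4 := by
          have hle : (2*p-1)/p ≤ 2 := by
            rw [div_le_iff₀ hp0]; linarith
          calc (2:ℝ)^((2*p-1)/p) ≤ 2^(2:ℝ) := Real.rpow_le_rpow_of_exponent_le one_le_two hle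
            _ = 4 := by
              rw [show ((2:ℝ)) = ((2:ℕ):ℝ) from by norm_num]
              rw [Real.rpow_natCast]
              norm_num
        nlinarith [hc0]
end
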